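/- arXiv:1910.03193 — 6 statements merged into one kernel-verified Lean document; each statement's English description precedes it below -/
import Mathlib

section
/- Let σ : ℝ → ℝ be a Tauber–Wiener function, X a Banach space, K ⊆ X a compact set, V a compact set in C(K), and f : V → ℝ a continuous functional. Then for every ε > 0 there exist a positive integer n, points x_1, …, x_m ∈ K, and real constants c_i, θ_i, ξ_{ij} (for i = 1,…,n, j = 1,…,m) such that |f(u) − Σ_{i=1}^n c_i σ(Σ_{j=1}^m ξ_{ij} u(x_j) + θ_i)| < ε holds for all u ∈ V. -/
/-- A function `σ : ℝ → ℝ` is a Tauber–Wiener function if for every pair of reals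
`a < b`, the finite linear combinations `x ↦ ∑ᵢ cᵢ σ(λᵢ x + θᵢ)` are dense in
`C([a,b])` with the sup-norm. -/
def IsTauberWiener (σ : ℝ → ℝ) : Prop :=
  ∀ a b : ℝ, a < b → ∀ f : ℝ → ℝ, ContinuousOn f (Set.Icc a b) →
    ∀ ε : ℝ, 0 < ε →
      ∃ (N : ℕ) (c lam θ : Fin N → ℝ),
        ∀ x ∈ Set.Icc a b, |f x - ∑ i, c i * σ (lam i * x + θ i)| < ε


open scoped BigOperators

/-- Functions on `V` representable as finite sums of exponentials of
linear combinations of finitely many point evaluations. -/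
def UARep {X : Type*} [NormedAddCommGroup X] {K : Set X} (V : Set C(K, ℝ))
    (g : C(V, ℝ)) : Prop :=
  ∃ (n m : ℕ) (x : Fin m → K) (c θ : Fin n → ℝ) (ξ : Fin n → Fin m → ℝ),
    ∀ w : V, g w = ∑ i, c i * Real.exp (∑ j, ξ i j * (w : C(K, ℝ)) (x j) + θ i)

section
variable {X : Type*} [NormedAddCommGroup X] {K : Set X} {V : Set C(K, ℝ)}

lemma UARep.const (r : ℝ) : UARep V ((algebraMap ℝ C(V, ℝ)) r) := by
  refine ⟨1, 0, Fin.elim0, fun _ => r, fun _ => 0, fun _ => Fin.elim0, fun w => ?_⟩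
  simp [Algebra.algebraMap_eq_smul_one]

lemma UARep.add {g h : C(V, ℝ)} (hg : UARep V g) (hh : UARep V h) :
    UARep V (g + h) := by
  obtain ⟨n1, m1, x1, c1, θ1, ξ1, H1⟩ := hg
  obtain ⟨n2, m2, x2, c2, θ2, ξ2, H2⟩ := hh
  refine ⟨n1 + n2, m1 + m2, Fin.append x1 x2, Fin.append c1 c2, Fin.append θ1 θ2,
    Fin.append (fun i => Fin.append (ξ1 i) 0) (fun i => Fin.append 0 (ξ2 i)), fun w => ?_⟩
  rw [Fin.sum_univ_add]
  have e1 : ∀ i : Fin n1,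
      Fin.append c1 c2 (Fin.castAdd n2 i) *
        Real.exp (∑ j, Fin.append (fun i => Fin.append (ξ1 i) 0)
            (fun i => Fin.append 0 (ξ2 i)) (Fin.castAdd n2 i) j *
            (w : C(K, ℝ)) (Fin.append x1 x2 j) + Fin.append θ1 θ2 (Fin.castAdd n2 i))
      = c1 i * Real.exp (∑ j, ξ1 i j * (w : C(K, ℝ)) (x1 j) + θ1 i) := by
    intro i
    rw [Fin.sum_univ_add]
    simp [Fin.append_left, Fin.append_right]
  have e2 : ∀ i : Fin n2,
      Fin.append c1 c2 (Fin.natAdd n1 i) *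
        Real.exp (∑ j, Fin.append (fun i => Fin.append (ξ1 i) 0)
            (fun i => Fin.append 0 (ξ2 i)) (Fin.natAdd n1 i) j *
            (w : C(K, ℝ)) (Fin.append x1 x2 j) + Fin.append θ1 θ2 (Fin.natAdd n1 i))
      = c2 i * Real.exp (∑ j, ξ2 i j * (w : C(K, ℝ)) (x2 j) + θ2 i) := by
    intro i
    rw [Fin.sum_univ_add]
    simp [Fin.append_left, Fin.append_right]
  simp only [ContinuousMap.add_apply, Finset.sum_congr rfl fun i _ => e1 i,
    Finset.sum_congr rfl fun i _ => e2 i, H1 w, H2 w]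

lemma UARep.mul {g h : C(V, ℝ)} (hg : UARep V g) (hh : UARep V h) :
    UARep V (g * h) := by
  obtain ⟨n1, m1, x1, c1, θ1, ξ1, H1⟩ := hg
  obtain ⟨n2, m2, x2, c2, θ2, ξ2, H2⟩ := hh
  refine ⟨n1 * n2, m1 + m2, Fin.append x1 x2,
    fun p => c1 (finProdFinEquiv.symm p).1 * c2 (finProdFinEquiv.symm p).2,
    fun p => θ1 (finProdFinEquiv.symm p).1 + θ2 (finProdFinEquiv.symm p).2,
    fun p => Fin.append (ξ1 (finProdFinEquiv.symm p).1) (ξ2 (finProdFinEquiv.symm p).2),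
    fun w => ?_⟩
  have key : ∀ p : Fin n1 × Fin n2,
      (c1 p.1 * c2 p.2) *
        Real.exp (∑ j, Fin.append (ξ1 p.1) (ξ2 p.2) j * (w : C(K, ℝ)) (Fin.append x1 x2 j)
          + (θ1 p.1 + θ2 p.2))
      = (c1 p.1 * Real.exp (∑ j, ξ1 p.1 j * (w : C(K, ℝ)) (x1 j) + θ1 p.1)) *
        (c2 p.2 * Real.exp (∑ j, ξ2 p.2 j * (w : C(K, ℝ)) (x2 j) + θ2 p.2)) := by
    intro p
    rw [Fin.sum_univ_add]
    simp only [Fin.append_left, Fin.append_right]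
    rw [show (∑ j, ξ1 p.1 j * (w : C(K, ℝ)) (x1 j)) + (∑ j, ξ2 p.2 j * (w : C(K, ℝ)) (x2 j))
        + (θ1 p.1 + θ2 p.2)
        = (∑ j, ξ1 p.1 j * (w : C(K, ℝ)) (x1 j) + θ1 p.1)
          + (∑ j, ξ2 p.2 j * (w : C(K, ℝ)) (x2 j) + θ2 p.2) by ring,
      Real.exp_add]
    ring
  calc (g * h) w
      = (∑ i, c1 i * Real.exp (∑ j, ξ1 i j * (w : C(K, ℝ)) (x1 j) + θ1 i)) *
        (∑ i, c2 i * Real.exp (∑ j, ξ2 i j * (w : C(K, ℝ)) (x2 j) + θ2 i)) := by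
        rw [ContinuousMap.mul_apply, H1 w, H2 w]
    _ = ∑ p : Fin n1 × Fin n2,
          (c1 p.1 * c2 p.2) *
            Real.exp (∑ j, Fin.append (ξ1 p.1) (ξ2 p.2) j * (w : C(K, ℝ)) (Fin.append x1 x2 j)
              + (θ1 p.1 + θ2 p.2)) := by
        rw [Finset.sum_mul_sum, Fintype.sum_prod_type]
        exact Finset.sum_congr rfl fun i _ => Finset.sum_congr rfl fun k _ => (key (i, k)).symm
    _ = _ := (Equiv.sum_comp finProdFinEquiv.symm _).symm
end


/-- **Universal Approximation Theorem for Functional** (Chen & Chen).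
If `σ` is Tauber–Wiener, `X` a Banach space, `K ⊆ X` compact, `V` a compact set in
`C(K)` and `f` a continuous functional on `V`, then for every `ε > 0` there exist a
positive integer `n`, points `x₁, …, x_m ∈ K` and real constants `cᵢ, θᵢ, ξᵢⱼ` such
that `|f(u) − ∑ᵢ cᵢ σ(∑ⱼ ξᵢⱼ u(xⱼ) + θᵢ)| < ε` for all `u ∈ V`. -/
theorem universal_approximation_for_functional
    {X : Type*} [NormedAddCommGroup X] [NormedSpace ℝ X] [CompleteSpace X]
    (σ : ℝ → ℝ) (hσ : IsTauberWiener σ)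
    (K : Set X) (hK : IsCompact K)
    (V : Set C(K, ℝ)) (hV : IsCompact V)
    (f : C(K, ℝ) → ℝ) (hf : ContinuousOn f V)
    (ε : ℝ) (hε : 0 < ε) :
    ∃ (n m : ℕ), 0 < n ∧
      ∃ (x : Fin m → K) (c θ : Fin n → ℝ) (ξ : Fin n → Fin m → ℝ),
        ∀ u ∈ V, |f u - ∑ i, c i * σ (∑ j, ξ i j * u (x j) + θ i)| < ε := by
  haveI : CompactSpace K := isCompact_iff_compactSpace.mp hK
  haveI : CompactSpace V := isCompact_iff_compactSpace.mp hV
  -- the generators: exponentials of point evaluations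
  have gen_cont : ∀ x : K, Continuous fun w : V => Real.exp ((w : C(K, ℝ)) x) := by
    intro x
    exact Real.continuous_exp.comp
      ((continuous_eval_const x).comp continuous_subtype_val)
  let gen : K → C(V, ℝ) := fun x => ⟨fun w => Real.exp ((w : C(K, ℝ)) x), gen_cont x⟩
  let A : Subalgebra ℝ C(V, ℝ) := Algebra.adjoin ℝ (Set.range gen)
  -- A separates points
  have sep : A.SeparatesPoints := by
    intro w1 w2 hne
    have hne' : (w1 : C(K, ℝ)) ≠ (w2 : C(K, ℝ)) := fun h => hne (Subtype.ext h)
    have : ∃ x : K, (w1 : C(K, ℝ)) x ≠ (w2 : C(K, ℝ)) x := by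
      by_contra h
      push_neg at h
      exact hne' (ContinuousMap.ext h)
    obtain ⟨x, hx⟩ := this
    refine ⟨(gen x : V → ℝ), ⟨gen x, Algebra.subset_adjoin ⟨x, rfl⟩, rfl⟩, ?_⟩
    simpa [gen, Real.exp_eq_exp] using hx
  -- Stone–Weierstrass
  let f' : C(V, ℝ) := ⟨V.restrict f, hf.restrict⟩
  obtain ⟨g, hg⟩ := ContinuousMap.exists_mem_subalgebra_near_continuousMap_of_separatesPoints
    A sep f' (ε / 2) (by linarith)
  -- every element of A is representable
  have hrep : UARep V (g : C(V, ℝ)) := by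
    refine Algebra.adjoin_induction (s := Set.range gen)
      (p := fun h _ => UARep V h) ?_ ?_ ?_ ?_ g.2
    · rintro _ ⟨x, rfl⟩
      refine ⟨1, 1, fun _ => x, fun _ => 1, fun _ => 0, fun _ _ => 1, fun w => ?_⟩
      simp [gen]
    · exact fun r => UARep.const r
    · exact fun a b _ _ ha hb => UARep.add ha hb
    · exact fun a b _ _ ha hb => UARep.mul ha hb
  obtain ⟨n, m, x, c, θ, ξ, Hrep⟩ := hrep
  -- bound the inner arguments
  obtain ⟨C0, hC0⟩ := isBounded_iff_forall_norm_le.mp hV.isBounded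
  set C : ℝ := max C0 0 with hC
  have hCnn : 0 ≤ C := le_max_right _ _
  set B : Fin n → ℝ := fun i => ∑ j, |ξ i j| * C + |θ i| with hB
  have hBnn : ∀ i, 0 ≤ B i := fun i =>
    add_nonneg (Finset.sum_nonneg fun j _ => mul_nonneg (abs_nonneg _) hCnn) (abs_nonneg _)
  set R : ℝ := (∑ i, B i) + 1 with hR
  have hRpos : 0 < R := by
    have := Finset.sum_nonneg fun i (_ : i ∈ Finset.univ) => hBnn i
    simp only [hR]; linarith
  have hmem : ∀ u ∈ V, ∀ i : Fin n, (∑ j, ξ i j * u (x j) + θ i) ∈ Set.Icc (-R) R := by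
    intro u hu i
    have hnorm : ‖u‖ ≤ C := le_trans (hC0 u hu) (le_max_left _ _)
    have habs : |∑ j, ξ i j * u (x j) + θ i| ≤ B i := by
      calc |∑ j, ξ i j * u (x j) + θ i| ≤ |∑ j, ξ i j * u (x j)| + |θ i| := abs_add_le _ _
        _ ≤ (∑ j, |ξ i j * u (x j)|) + |θ i| :=
            add_le_add_left (Finset.abs_sum_le_sum_abs _ _) _
        _ ≤ (∑ j, |ξ i j| * C) + |θ i| := by
            refine add_le_add_left (Finset.sum_le_sum fun j _ => ?_) _
            rw [abs_mul]
            exact mul_le_mul_of_nonneg_left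
              (le_trans (ContinuousMap.norm_coe_le_norm u (x j)) hnorm) (abs_nonneg _)
    have hBR : B i ≤ R := by
      have h1 : B i ≤ ∑ i', B i' :=
        Finset.single_le_sum (fun i' (_ : i' ∈ Finset.univ) => hBnn i') (Finset.mem_univ i)
      simp only [hR]; linarith
    have := abs_le.mp (le_trans habs hBR)
    exact ⟨this.1, this.2⟩
  -- Tauber–Wiener approximation of exp
  set ε' : ℝ := ε / 2 / ((∑ i, |c i|) + 1) with hε'def
  have hcnn : 0 ≤ ∑ i, |c i| := Finset.sum_nonneg fun i _ => abs_nonneg _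
  have hε' : 0 < ε' := div_pos (by linarith) (by linarith)
  obtain ⟨N, c', lam, θ', hTW⟩ := hσ (-R) R (by linarith) Real.exp
    Real.continuous_exp.continuousOn ε' hε'
  -- assemble the final data
  let e : Fin (n * N) ≃ Fin n × Fin N := finProdFinEquiv.symm
  refine ⟨n * N + 1, m, Nat.succ_pos _, x,
    Fin.snoc (fun p => c (e p).1 * c' (e p).2) 0,
    Fin.snoc (fun p => lam (e p).2 * θ (e p).1 + θ' (e p).2) 0,
    Fin.snoc (fun p j => lam (e p).2 * ξ (e p).1 j) (fun _ => 0),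
    fun u hu => ?_⟩
  have inner : ∀ (i : Fin n) (k : Fin N),
      (∑ j, lam k * ξ i j * u (x j)) + (lam k * θ i + θ' k)
        = lam k * (∑ j, ξ i j * u (x j) + θ i) + θ' k := by
    intro i k
    have h1 : ∑ j, lam k * ξ i j * u (x j) = lam k * ∑ j, ξ i j * u (x j) := by
      rw [Finset.mul_sum]
      exact Finset.sum_congr rfl fun j _ => mul_assoc _ _ _
    rw [h1]; ring
  have hsum : (∑ q : Fin (n * N + 1),
        (Fin.snoc (fun p => c (e p).1 * c' (e p).2) 0 : Fin (n * N + 1) → ℝ) q *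
          σ (∑ j, (Fin.snoc (fun p j => lam (e p).2 * ξ (e p).1 j) (fun _ => 0) :
              Fin (n * N + 1) → Fin m → ℝ) q j * u (x j)
            + (Fin.snoc (fun p => lam (e p).2 * θ (e p).1 + θ' (e p).2) 0 :
              Fin (n * N + 1) → ℝ) q))
      = ∑ i, c i * ∑ k, c' k * σ (lam k * (∑ j, ξ i j * u (x j) + θ i) + θ' k) := by
    rw [Fin.sum_univ_castSucc]
    simp only [Fin.snoc_castSucc, Fin.snoc_last, zero_mul, add_zero]
    calc (∑ p : Fin (n * N), c (e p).1 * c' (e p).2 *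
            σ (∑ j, lam (e p).2 * ξ (e p).1 j * u (x j)
              + (lam (e p).2 * θ (e p).1 + θ' (e p).2)))
        = ∑ q : Fin n × Fin N, c q.1 * c' q.2 *
            σ (∑ j, lam q.2 * ξ q.1 j * u (x j) + (lam q.2 * θ q.1 + θ' q.2)) :=
          Fintype.sum_equiv e _ _ (fun p => rfl)
      _ = ∑ i, ∑ k, c i * c' k *
            σ (lam k * (∑ j, ξ i j * u (x j) + θ i) + θ' k) := by
          rw [Fintype.sum_prod_type]
          exact Finset.sum_congr rfl fun i _ => Finset.sum_congr rfl fun k _ => by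
            rw [inner i k]
      _ = ∑ i, c i * ∑ k, c' k * σ (lam k * (∑ j, ξ i j * u (x j) + θ i) + θ' k) := by
          refine Finset.sum_congr rfl fun i _ => ?_
          rw [Finset.mul_sum]
          exact Finset.sum_congr rfl fun k _ => by ring
  rw [hsum]
  -- error estimate
  have hgw : (g : C(V, ℝ)) ⟨u, hu⟩
      = ∑ i, c i * Real.exp (∑ j, ξ i j * u (x j) + θ i) := Hrep ⟨u, hu⟩
  have h1 : |f u - (g : C(V, ℝ)) ⟨u, hu⟩| < ε / 2 := by
    have := ContinuousMap.norm_coe_le_norm ((g : C(V, ℝ)) - f') ⟨u, hu⟩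
    have h2 : ((g : C(V, ℝ)) - f') ⟨u, hu⟩ = (g : C(V, ℝ)) ⟨u, hu⟩ - f u := by
      simp [f', ContinuousMap.sub_apply]
      rfl
    rw [h2] at this
    rw [abs_sub_comm]
    exact lt_of_le_of_lt this hg
  have h2 : |(g : C(V, ℝ)) ⟨u, hu⟩
      - ∑ i, c i * ∑ k, c' k * σ (lam k * (∑ j, ξ i j * u (x j) + θ i) + θ' k)|
      ≤ (∑ i, |c i|) * ε' := by
    rw [hgw, ← Finset.sum_sub_distrib]
    calc |∑ i, (c i * Real.exp (∑ j, ξ i j * u (x j) + θ i)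
            - c i * ∑ k, c' k * σ (lam k * (∑ j, ξ i j * u (x j) + θ i) + θ' k))|
        ≤ ∑ i, |c i * Real.exp (∑ j, ξ i j * u (x j) + θ i)
            - c i * ∑ k, c' k * σ (lam k * (∑ j, ξ i j * u (x j) + θ i) + θ' k)| :=
          Finset.abs_sum_le_sum_abs _ _
      _ ≤ ∑ i, |c i| * ε' := by
          refine Finset.sum_le_sum fun i _ => ?_
          rw [← mul_sub, abs_mul]
          refine mul_le_mul_of_nonneg_left ?_ (abs_nonneg _)
          exact le_of_lt (hTW _ (hmem u hu i))
      _ = (∑ i, |c i|) * ε' := (Finset.sum_mul _ _ _).symm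
  have h3 : (∑ i, |c i|) * ε' < ε / 2 := by
    have hne : (∑ i, |c i|) + 1 ≠ 0 := by positivity
    have hmain : ((∑ i, |c i|) + 1) * ε' = ε / 2 := by
      rw [hε'def, mul_comm, div_mul_cancel₀ _ hne]
    nlinarith
  calc |f u - ∑ i, c i * ∑ k, c' k * σ (lam k * (∑ j, ξ i j * u (x j) + θ i) + θ' k)|
      ≤ |f u - (g : C(V, ℝ)) ⟨u, hu⟩| + |(g : C(V, ℝ)) ⟨u, hu⟩
          - ∑ i, c i * ∑ k, c' k * σ (lam k * (∑ j, ξ i j * u (x j) + θ i) + θ' k)| :=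
        abs_sub_le _ _ _
    _ < ε / 2 + ε / 2 := by
        exact add_lt_add_of_lt_of_le h1 (le_trans h2 (le_of_lt h3))
    _ = ε := by ring
end

section
/- Let σ : ℝ → ℝ be a continuous function of at most polynomial growth, i.e., there exist C > 0 and k ∈ ℕ such that |σ(x)| ≤ C(1 + |x|)^k for all x ∈ ℝ (so that σ defines a tempered distribution on ℝ). Then σ is a Tauber–Wiener function if and only if σ is not a polynomial. -/
namespace TWaux

open Set Finset MeasureTheory Function Polynomial Convolution Filter Topology

section Machinery

variable {σ : ℝ → ℝ} {a b : ℝ}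

def Approx (σ : ℝ → ℝ) (a b : ℝ) (f : ℝ → ℝ) : Prop :=
  ∀ ε : ℝ, 0 < ε → ∃ (N : ℕ) (c lam θ : Fin N → ℝ),
    ∀ x ∈ Set.Icc a b, |f x - ∑ i, c i * σ (lam i * x + θ i)| < ε

lemma approx_congr {f g : ℝ → ℝ} (h : ∀ x ∈ Set.Icc a b, f x = g x)
    (hf : Approx σ a b f) : Approx σ a b g := by
  intro ε hε
  obtain ⟨N, c, lam, θ, H⟩ := hf ε hε
  exact ⟨N, c, lam, θ, fun x hx => (h x hx) ▸ H x hx⟩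

lemma approx_base (l t : ℝ) : Approx σ a b (fun x => σ (l * x + t)) := by
  intro ε hε
  refine ⟨1, fun _ => 1, fun _ => l, fun _ => t, fun x hx => ?_⟩
  simp [hε]

lemma approx_zero : Approx σ a b (fun _ => 0) := by
  intro ε hε
  exact ⟨0, Fin.elim0, Fin.elim0, Fin.elim0, fun x hx => by simpa using hε⟩

lemma approx_add {f g : ℝ → ℝ} (hf : Approx σ a b f) (hg : Approx σ a b g) :
    Approx σ a b (fun x => f x + g x) := by
  intro ε hε
  obtain ⟨N₁, c₁, l₁, t₁, H₁⟩ := hf (ε/2) (by linarith)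
  obtain ⟨N₂, c₂, l₂, t₂, H₂⟩ := hg (ε/2) (by linarith)
  refine ⟨N₁ + N₂, Fin.addCases c₁ c₂, Fin.addCases l₁ l₂, Fin.addCases t₁ t₂, fun x hx => ?_⟩
  have hsum : ∑ i : Fin (N₁ + N₂),
      Fin.addCases (motive := fun _ => ℝ) c₁ c₂ i *
        σ (Fin.addCases (motive := fun _ => ℝ) l₁ l₂ i * x +
          Fin.addCases (motive := fun _ => ℝ) t₁ t₂ i)
      = (∑ i : Fin N₁, c₁ i * σ (l₁ i * x + t₁ i)) +
        ∑ i : Fin N₂, c₂ i * σ (l₂ i * x + t₂ i) := by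
    rw [Fin.sum_univ_add]
    simp
  rw [hsum]
  calc |f x + g x - ((∑ i : Fin N₁, c₁ i * σ (l₁ i * x + t₁ i)) +
        ∑ i : Fin N₂, c₂ i * σ (l₂ i * x + t₂ i))|
      ≤ |f x - ∑ i : Fin N₁, c₁ i * σ (l₁ i * x + t₁ i)| +
        |g x - ∑ i : Fin N₂, c₂ i * σ (l₂ i * x + t₂ i)| := by
        rw [show f x + g x - ((∑ i : Fin N₁, c₁ i * σ (l₁ i * x + t₁ i)) +
          ∑ i : Fin N₂, c₂ i * σ (l₂ i * x + t₂ i)) =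
          (f x - ∑ i : Fin N₁, c₁ i * σ (l₁ i * x + t₁ i)) +
          (g x - ∑ i : Fin N₂, c₂ i * σ (l₂ i * x + t₂ i)) by ring]
        exact abs_add_le _ _
    _ < ε/2 + ε/2 := add_lt_add (H₁ x hx) (H₂ x hx)
    _ = ε := by ring

lemma approx_smul (r : ℝ) {f : ℝ → ℝ} (hf : Approx σ a b f) :
    Approx σ a b (fun x => r * f x) := by
  intro ε hε
  have hpos : 0 < ε / (|r| + 1) := by positivity
  obtain ⟨N, c, l, t, H⟩ := hf _ hpos
  refine ⟨N, fun i => r * c i, l, t, fun x hx => ?_⟩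
  have : ∑ i : Fin N, r * c i * σ (l i * x + t i)
      = r * ∑ i : Fin N, c i * σ (l i * x + t i) := by
    rw [Finset.mul_sum]
    exact Finset.sum_congr rfl fun i _ => by ring
  rw [this, ← mul_sub, abs_mul]
  calc |r| * |f x - ∑ i : Fin N, c i * σ (l i * x + t i)|
      ≤ |r| * (ε / (|r| + 1)) := by
        apply mul_le_mul_of_nonneg_left (le_of_lt (H x hx)) (abs_nonneg r)
    _ < ε := by
        rw [mul_div_assoc']
        rw [div_lt_iff₀ (by positivity)]
        nlinarith [abs_nonneg r]

lemma approx_sub {f g : ℝ → ℝ} (hf : Approx σ a b f) (hg : Approx σ a b g) :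
    Approx σ a b (fun x => f x - g x) := by
  have := approx_add hf (approx_smul (-1) hg)
  refine approx_congr (fun x _ => ?_) this
  ring

/-- Closure under uniform approximation on `[a, b]`. -/
lemma approx_of_close {f : ℝ → ℝ}
    (h : ∀ ε : ℝ, 0 < ε → ∃ g : ℝ → ℝ, Approx σ a b g ∧
      ∀ x ∈ Set.Icc a b, |f x - g x| < ε) : Approx σ a b f := by
  intro ε hε
  obtain ⟨g, hg, hfg⟩ := h (ε/2) (by linarith)
  obtain ⟨N, c, l, t, H⟩ := hg (ε/2) (by linarith)
  refine ⟨N, c, l, t, fun x hx => ?_⟩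
  calc |f x - ∑ i : Fin N, c i * σ (l i * x + t i)|
      ≤ |f x - g x| + |g x - ∑ i : Fin N, c i * σ (l i * x + t i)| := by
        rw [show f x - ∑ i : Fin N, c i * σ (l i * x + t i) =
          (f x - g x) + (g x - ∑ i : Fin N, c i * σ (l i * x + t i)) by ring]
        exact abs_add_le _ _
    _ < ε/2 + ε/2 := add_lt_add (hfg x hx) (H x hx)
    _ = ε := by ring

lemma approx_finsetSum {ι : Type*} (s : Finset ι) {F : ι → ℝ → ℝ}
    (h : ∀ i ∈ s, Approx σ a b (F i)) :
    Approx σ a b (fun x => ∑ i ∈ s, F i x) := by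
  classical
  induction s using Finset.induction_on with
  | empty => simpa using (approx_zero (σ := σ) (a := a) (b := b))
  | insert j s' hni ih =>
    have h1 := h j (Finset.mem_insert_self j s')
    have h2 := ih (fun i hi => h i (Finset.mem_insert_of_mem hi))
    have := approx_add h1 h2
    refine approx_congr (fun x _ => ?_) this
    rw [Finset.sum_insert hni]

lemma diff_identity (n : ℕ) (a : ℕ → ℝ) :
    ∑ j ∈ range (n+2), (-1:ℝ)^j * ((n+1).choose j : ℕ) * a j
      = ∑ j ∈ range (n+1), (-1:ℝ)^j * (n.choose j : ℕ) * (a j - a (j+1)) := by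
  set g : ℕ → ℝ := fun j => (-1:ℝ)^j * (n.choose j : ℕ) * a j with hg
  set h : ℕ → ℝ := fun j => (-1:ℝ)^j * (n.choose j : ℕ) * a (j+1) with hh
  have key : ∑ j ∈ range (n+2), (-1:ℝ)^j * ((n+1).choose j : ℕ) * a j
      = (∑ j ∈ range (n+1), (-1:ℝ)^(j+1) * ((n+1).choose (j+1) : ℕ) * a (j+1))
        + (-1:ℝ)^0 * ((n+1).choose 0 : ℕ) * a 0 :=
    Finset.sum_range_succ' _ (n+1)
  have hstep : ∀ j, (-1:ℝ)^(j+1) * (((n+1).choose (j+1) : ℕ) : ℝ) * a (j+1)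
      = -(h j) + g (j+1) := by
    intro j; simp only [hg, hh, Nat.choose_succ_succ]; push_cast; ring
  have key2 : ∑ j ∈ range (n+2), g j = (∑ j ∈ range (n+1), g (j+1)) + g 0 :=
    Finset.sum_range_succ' _ (n+1)
  have key3 : ∑ j ∈ range (n+2), g j = (∑ j ∈ range (n+1), g j) + g (n+1) :=
    Finset.sum_range_succ _ (n+1)
  have hgn : g (n+1) = 0 := by simp [hg, Nat.choose_succ_self]
  have hrhs : ∑ j ∈ range (n+1), (-1:ℝ)^j * (n.choose j : ℕ) * (a j - a (j+1))
      = (∑ j ∈ range (n+1), g j) - ∑ j ∈ range (n+1), h j := by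
    rw [← Finset.sum_sub_distrib]
    exact Finset.sum_congr rfl fun j _ => by simp only [hg, hh]; ring
  have hsum : ∑ j ∈ range (n+1), (-1:ℝ)^(j+1) * ((n+1).choose (j+1) : ℕ) * a (j+1)
      = (∑ j ∈ range (n+1), -(h j)) + ∑ j ∈ range (n+1), g (j+1) := by
    rw [← Finset.sum_add_distrib]
    exact Finset.sum_congr rfl fun j _ => hstep j
  have hf0 : (-1:ℝ)^0 * (((n+1).choose 0 : ℕ) : ℝ) * a 0 = g 0 := by simp [hg]
  have hshift : ∑ j ∈ range (n+1), g (j+1) = (∑ j ∈ range (n+1), g j) + g (n+1) - g 0 := by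
    rw [← key3, key2]; ring
  rw [key, hsum, hf0, hrhs, hshift, hgn, Finset.sum_neg_distrib]
  ring

lemma alt_diff_poly_zero : ∀ (n : ℕ) (q : ℝ[X]), q.natDegree < n → ∀ t s : ℝ,
    ∑ j ∈ range (n+1), (-1:ℝ)^j * (n.choose j : ℕ) * q.eval (t + j*s) = 0 := by
  intro n
  induction n with
  | zero => intro q hq; exact absurd hq (Nat.not_lt_zero _)
  | succ m ih =>
    intro q hq t s
    by_cases hdeg : q.natDegree = 0
    · obtain ⟨c, rfl⟩ := Polynomial.natDegree_eq_zero.mp hdeg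
      simp only [Polynomial.eval_C]
      rw [← Finset.sum_mul]
      have : ∑ j ∈ range (m+1+1), (-1:ℝ)^j * ((m+1).choose j : ℕ) = 0 := by
        have h := Int.alternating_sum_range_choose_of_ne (Nat.succ_ne_zero m)
        have h2 := congrArg (fun z : ℤ => (z : ℝ)) h
        push_cast at h2
        simpa using h2
      rw [this, zero_mul]
    · set r : ℝ[X] := q.comp (X + C s) - q with hr
      have hreval : ∀ u : ℝ, r.eval u = q.eval (u + s) - q.eval u := by
        intro u; simp [hr, Polynomial.eval_comp]
      have hq0 : q ≠ 0 := fun h => hdeg (by simp [h])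
      have hndcomp : (q.comp (X + C s)).natDegree = q.natDegree := by
        rw [Polynomial.natDegree_comp, Polynomial.natDegree_X_add_C, mul_one]
      have hcomp0 : q.comp (X + C s) ≠ 0 := by
        intro h
        rw [h] at hndcomp
        exact hdeg (by simpa using hndcomp.symm)
      have hcompdeg : (q.comp (X + C s)).degree = q.degree := by
        rw [Polynomial.degree_eq_natDegree hcomp0, Polynomial.degree_eq_natDegree hq0, hndcomp]
      have hlc : (q.comp (X + C s)).leadingCoeff = q.leadingCoeff := by
        rw [Polynomial.leadingCoeff_comp (by simp [Polynomial.natDegree_X_add_C])]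
        simp [Polynomial.leadingCoeff_X_add_C]
      have hdr : r.natDegree < q.natDegree := by
        have hdlt : r.degree < q.degree := by
          have := Polynomial.degree_sub_lt hcompdeg hcomp0 hlc
          rwa [hcompdeg] at this
        by_cases hr0 : r = 0
        · rw [hr0]; simpa using Nat.pos_of_ne_zero hdeg
        · exact Polynomial.natDegree_lt_natDegree hr0 hdlt
      have hrm : r.natDegree < m := lt_of_lt_of_le hdr (Nat.lt_succ_iff.mp hq)
      have hih := ih r hrm t s
      have hid := diff_identity m (fun j => q.eval (t + j*s))
      rw [hid]
      have hterm : ∀ j ∈ range (m+1), (-1:ℝ)^j * (m.choose j : ℕ) *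
          (q.eval (t + j*s) - q.eval (t + (j+1:ℕ)*s))
          = -((-1:ℝ)^j * (m.choose j : ℕ) * r.eval (t + j*s)) := by
        intro j _
        rw [hreval]
        have : t + ((j:ℝ)+1)*s = (t + j*s) + s := by ring
        push_cast
        rw [this]
        ring
      rw [Finset.sum_congr rfl hterm, Finset.sum_neg_distrib, hih, neg_zero]

lemma not_TW_of_poly (σ : ℝ → ℝ) (p : ℝ[X]) (hp : ∀ x, σ x = p.eval x) :
    ¬ IsTauberWiener σ := by
  intro hTW
  set n := p.natDegree + 1 with hn
  have hn0 : (0:ℝ) < (n:ℝ) := by positivity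
  set f₀ : ℝ → ℝ := fun x => Real.cos (x * Real.pi) with hf₀
  have hcf : ContinuousOn f₀ (Set.Icc 0 (n:ℝ)) :=
    (Real.continuous_cos.comp (continuous_id.mul continuous_const)).continuousOn
  obtain ⟨N, c, lam, θ, H⟩ := hTW 0 (n:ℝ) hn0 f₀ hcf 1 one_pos
  set g : ℝ → ℝ := fun x => ∑ i : Fin N, c i * σ (lam i * x + θ i) with hgdef
  have hmem : ∀ j ∈ range (n+1), ((j:ℝ)) ∈ Set.Icc (0:ℝ) (n:ℝ) := by
    intro j hj
    exact ⟨Nat.cast_nonneg j, by exact_mod_cast Nat.lt_succ_iff.mp (Finset.mem_range.mp hj)⟩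
  -- the alternating functional kills g
  have hg0 : ∑ j ∈ range (n+1), (-1:ℝ)^j * (n.choose j : ℕ) * g (j:ℝ) = 0 := by
    have : ∀ j ∈ range (n+1), (-1:ℝ)^j * (n.choose j : ℕ) * g (j:ℝ)
        = ∑ i : Fin N, c i * ((-1:ℝ)^j * (n.choose j : ℕ) * p.eval (lam i * (j:ℝ) + θ i)) := by
      intro j _
      rw [hgdef]
      simp only [hp]
      rw [Finset.mul_sum]
      exact Finset.sum_congr rfl fun i _ => by ring
    rw [Finset.sum_congr rfl this, Finset.sum_comm]
    apply Finset.sum_eq_zero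
    intro i _
    rw [← Finset.mul_sum]
    have hq : ∀ j : ℕ, p.eval (lam i * (j:ℝ) + θ i)
        = (p.comp (Polynomial.C (lam i) * Polynomial.X + Polynomial.C (θ i))).eval (0 + (j:ℝ)*1) := by
      intro j
      rw [Polynomial.eval_comp]
      simp
    have hdq : (p.comp (Polynomial.C (lam i) * Polynomial.X + Polynomial.C (θ i))).natDegree < n := by
      rw [Polynomial.natDegree_comp]
      calc p.natDegree * (Polynomial.C (lam i) * Polynomial.X + Polynomial.C (θ i)).natDegree
          ≤ p.natDegree * 1 := Nat.mul_le_mul_left _ (Polynomial.natDegree_linear_le)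
        _ < n := by omega
    have := alt_diff_poly_zero n _ hdq 0 1
    simp only [hq]
    rw [this, mul_zero]
  -- the alternating functional on f₀ gives 2^n
  have hf0val : ∀ j : ℕ, f₀ (j:ℝ) = (-1:ℝ)^j := by
    intro j
    have := Real.cos_nat_mul_pi_sub 0 j
    simpa using (by
      have h2 : f₀ (j:ℝ) = Real.cos ((j:ℝ) * Real.pi) := rfl
      rw [h2, show ((j:ℝ) * Real.pi) = (j:ℝ) * Real.pi - 0 by ring, Real.cos_nat_mul_pi_sub]
      simp : f₀ (j:ℝ) = (-1:ℝ)^j)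
  have hA : ∑ j ∈ range (n+1), (-1:ℝ)^j * (n.choose j : ℕ) * f₀ (j:ℝ) = 2^n := by
    have : ∀ j ∈ range (n+1), (-1:ℝ)^j * (n.choose j : ℕ) * f₀ (j:ℝ) = (n.choose j : ℕ) := by
      intro j _
      rw [hf0val j]
      have hsq : (-1:ℝ)^j * (-1:ℝ)^j = 1 := by
        rw [← pow_add]
        exact Even.neg_one_pow ⟨j, rfl⟩
      calc (-1:ℝ)^j * (n.choose j : ℕ) * (-1:ℝ)^j
          = ((-1:ℝ)^j * (-1:ℝ)^j) * (n.choose j : ℕ) := by ring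
        _ = (n.choose j : ℕ) := by rw [hsq, one_mul]
    rw [Finset.sum_congr rfl this]
    exact_mod_cast congrArg (fun m : ℕ => (m:ℝ)) (Nat.sum_range_choose n)
  -- contradiction
  have hlt : (2:ℝ)^n < 2^n := by
    calc (2:ℝ)^n = |∑ j ∈ range (n+1), (-1:ℝ)^j * (n.choose j : ℕ) * f₀ (j:ℝ)| := by
          rw [hA]; exact (abs_of_pos (by positivity)).symm
      _ = |∑ j ∈ range (n+1), (-1:ℝ)^j * (n.choose j : ℕ) * (f₀ (j:ℝ) - g (j:ℝ))| := by
          rw [show ∑ j ∈ range (n+1), (-1:ℝ)^j * (n.choose j : ℕ) * (f₀ (j:ℝ) - g (j:ℝ))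
            = (∑ j ∈ range (n+1), (-1:ℝ)^j * (n.choose j : ℕ) * f₀ (j:ℝ))
              - ∑ j ∈ range (n+1), (-1:ℝ)^j * (n.choose j : ℕ) * g (j:ℝ) from by
            rw [← Finset.sum_sub_distrib]
            exact Finset.sum_congr rfl fun j _ => by ring]
          rw [hg0, sub_zero]
      _ ≤ ∑ j ∈ range (n+1), |(-1:ℝ)^j * (n.choose j : ℕ) * (f₀ (j:ℝ) - g (j:ℝ))| :=
          Finset.abs_sum_le_sum_abs _ _
      _ = ∑ j ∈ range (n+1), (n.choose j : ℕ) * |f₀ (j:ℝ) - g (j:ℝ)| := by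
          refine Finset.sum_congr rfl fun j _ => ?_
          rw [abs_mul, abs_mul, abs_pow, abs_neg, abs_one, one_pow, one_mul,
            Nat.abs_cast]
      _ < ∑ j ∈ range (n+1), ((n.choose j : ℝ) * 1) := by
          apply Finset.sum_lt_sum_of_nonempty (by simp)
          intro j hj
          have hcp : (0:ℝ) < (n.choose j : ℕ) := by
            exact_mod_cast Nat.choose_pos (Nat.lt_succ_iff.mp (Finset.mem_range.mp hj))
          exact mul_lt_mul_of_pos_left (H (j:ℝ) (hmem j hj)) hcp
      _ = 2^n := by
          simp only [mul_one]
          exact_mod_cast congrArg (fun m : ℕ => (m:ℝ)) (Nat.sum_range_choose n)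
  exact absurd hlt (lt_irrefl _)

lemma approx_conv (σ : ℝ → ℝ) (hσ : Continuous σ) (a b : ℝ) (φ : ContDiffBump (0:ℝ))
    (l t : ℝ) :
    Approx σ a b
      (fun x => (φ.normed volume ⋆[ContinuousLinearMap.lsmul ℝ ℝ, volume] σ) (l*x + t)) := by
  intro ε hε
  set M := φ.rOut with hMdef
  have hM : 0 < M := φ.rOut_pos
  set ε' : ℝ := ε / (2*M + 1) with hε'def
  have hε' : 0 < ε' := by positivity
  -- the kernel as a function of (x, u)
  set G : ℝ × ℝ → ℝ := fun q => φ.normed volume q.2 * σ (l * q.1 + t - q.2) with hGdef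
  have hGcont : Continuous G := by
    apply Continuous.mul
    · exact φ.continuous_normed.comp continuous_snd
    · exact hσ.comp (by fun_prop)
  have hK : IsCompact ((Set.Icc a b) ×ˢ (Set.Icc (-M) M)) :=
    isCompact_Icc.prod isCompact_Icc
  obtain ⟨δ, hδ, hUC⟩ := (Metric.uniformContinuousOn_iff.mp
    (hK.uniformContinuousOn_of_continuous hGcont.continuousOn)) ε' hε'
  -- choose the mesh
  obtain ⟨N₀, hN₀⟩ := exists_nat_gt (2*M/δ)
  set N : ℕ := N₀ + 1 with hNdef
  have hNpos : 0 < (N:ℝ) := by positivity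
  have hmesh : 2*M/(N:ℝ) < δ := by
    rw [div_lt_iff₀ hNpos]
    have h1 : 2*M/δ < (N:ℝ) := lt_of_lt_of_le hN₀ (by exact_mod_cast Nat.le_succ N₀)
    rw [div_lt_iff₀ hδ] at h1
    linarith
  set h : ℝ := 2*M/(N:ℝ) with hhdef
  have hpos : 0 < h := by positivity
  set tp : ℕ → ℝ := fun j => -M + j * h with htpdef
  have htp0 : tp 0 = -M := by simp [htpdef]
  have htpN : tp N = M := by
    simp only [htpdef, hhdef]
    field_simp
    ring
  have htpmono : ∀ j, tp j < tp (j+1) := by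
    intro j
    simp only [htpdef]
    push_cast
    nlinarith
  have htpbound : ∀ j ≤ N, -M ≤ tp j ∧ tp j ≤ M := by
    intro j hj
    constructor
    · simp only [htpdef]
      nlinarith [Nat.cast_nonneg (α := ℝ) j]
    · simp only [htpdef]
      have hc : (j:ℝ) ≤ N := by exact_mod_cast hj
      have hNh : (N:ℝ)*h = 2*M := by
        rw [hhdef]; field_simp
      nlinarith [mul_le_mul_of_nonneg_right hc (le_of_lt hpos)]
  have htpdiff : ∀ j, tp (j+1) - tp j = h := by
    intro j; simp only [htpdef]; push_cast; ring
  -- the approximating combination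
  refine ⟨N, fun i => φ.normed volume (tp i.val) * h, fun _ => l, fun i => t - tp i.val,
    fun x hx => ?_⟩
  -- rewrite the convolution as an interval integral
  have hker : ∀ u : ℝ, u ∉ Set.Icc (-M) M → φ.normed volume u * σ (l*x + t - u) = 0 := by
    intro u hu
    have : φ.normed volume u = 0 := by
      by_contra hne
      have := φ.support_normed_eq (μ := volume) ▸ Function.mem_support.mpr hne
      rw [Real.ball_eq_Ioo] at this
      exact hu ⟨by simpa using le_of_lt this.1, le_of_lt (by simpa using this.2)⟩
    rw [this, zero_mul]
  have hconv : (φ.normed volume ⋆[ContinuousLinearMap.lsmul ℝ ℝ, volume] σ) (l*x + t)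
      = ∫ u in (-M)..M, φ.normed volume u * σ (l*x + t - u) := by
    rw [convolution_def]
    simp only [ContinuousLinearMap.lsmul_apply, smul_eq_mul]
    rw [← setIntegral_eq_integral_of_forall_compl_eq_zero hker,
      integral_Icc_eq_integral_Ioc, ← intervalIntegral.integral_of_le (by linarith : -M ≤ M)]
  have hFcont : Continuous (fun u => φ.normed volume u * σ (l*x + t - u)) := by
    apply Continuous.mul φ.continuous_normed
    exact hσ.comp (by fun_prop)
  have hsplit : ∫ u in (-M)..M, φ.normed volume u * σ (l*x + t - u)
      = ∑ j ∈ range N, ∫ u in (tp j)..(tp (j+1)), φ.normed volume u * σ (l*x + t - u) := by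
    rw [intervalIntegral.sum_integral_adjacent_intervals
      (fun j _ => hFcont.intervalIntegrable _ _), htp0, htpN]
  -- sum over Fin N equals sum over range N
  have hfin : ∑ i : Fin N, (φ.normed volume (tp i.val) * h) * σ (l * x + (t - tp i.val))
      = ∑ j ∈ range N, φ.normed volume (tp j) * σ (l*x + t - tp j) * h := by
    rw [Fin.sum_univ_eq_sum_range (fun j => (φ.normed volume (tp j) * h) * σ (l * x + (t - tp j)))]
    exact Finset.sum_congr rfl fun j _ => by ring_nf
  -- per-interval estimate
  have hxab : x ∈ Set.Icc a b := hx
  have hstep : ∀ j < N, |(∫ u in (tp j)..(tp (j+1)), φ.normed volume u * σ (l*x + t - u))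
      - φ.normed volume (tp j) * σ (l*x + t - tp j) * h| ≤ ε' * h := by
    intro j hj
    have hj1 : j + 1 ≤ N := hj
    have hb1 := htpbound j (le_of_lt hj)
    have hb2 := htpbound (j+1) hj1
    have hconst : φ.normed volume (tp j) * σ (l*x + t - tp j) * h
        = ∫ u in (tp j)..(tp (j+1)), φ.normed volume (tp j) * σ (l*x + t - tp j) := by
      rw [intervalIntegral.integral_const, htpdiff j, smul_eq_mul]
      ring
    rw [hconst, ← intervalIntegral.integral_sub (hFcont.intervalIntegrable _ _)
      (intervalIntegrable_const)]
    have hbound : ∀ u ∈ Set.uIoc (tp j) (tp (j+1)),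
        ‖φ.normed volume u * σ (l*x + t - u)
          - φ.normed volume (tp j) * σ (l*x + t - tp j)‖ ≤ ε' := by
      intro u hu
      rw [Set.uIoc_of_le (le_of_lt (htpmono j))] at hu
      have huIcc : u ∈ Set.Icc (-M) M :=
        ⟨le_trans hb1.1 (le_of_lt hu.1), le_trans hu.2 hb2.2⟩
      have htpIcc : tp j ∈ Set.Icc (-M) M := ⟨hb1.1, hb1.2⟩
      have hdist : dist ((x, u) : ℝ × ℝ) ((x, tp j) : ℝ × ℝ) < δ := by
        rw [Prod.dist_eq]
        simp only [dist_self]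
        rw [max_eq_right dist_nonneg, Real.dist_eq]
        have h1 : |u - tp j| ≤ h := by
          rw [abs_of_pos (by linarith [hu.1] : 0 < u - tp j)]
          have := htpdiff j
          linarith [hu.2]
        exact lt_of_le_of_lt h1 hmesh
      have := hUC (x, u) ⟨hxab, huIcc⟩ (x, tp j) ⟨hxab, htpIcc⟩ hdist
      rw [Real.dist_eq] at this
      exact le_of_lt this
    calc |∫ u in (tp j)..(tp (j+1)), (φ.normed volume u * σ (l*x + t - u)
          - φ.normed volume (tp j) * σ (l*x + t - tp j))|
        ≤ ε' * |tp (j+1) - tp j| :=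
          intervalIntegral.norm_integral_le_of_norm_le_const hbound
      _ = ε' * h := by rw [htpdiff j, abs_of_pos hpos]
  -- assemble
  beta_reduce
  rw [hfin, hconv, hsplit]
  have htotal : |∑ j ∈ range N, ((∫ u in (tp j)..(tp (j+1)), φ.normed volume u * σ (l*x + t - u))
      - φ.normed volume (tp j) * σ (l*x + t - tp j) * h)| ≤ (N:ℝ) * (ε' * h) := by
    calc |∑ j ∈ range N, ((∫ u in (tp j)..(tp (j+1)), φ.normed volume u * σ (l*x + t - u))
        - φ.normed volume (tp j) * σ (l*x + t - tp j) * h)|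
        ≤ ∑ j ∈ range N, |(∫ u in (tp j)..(tp (j+1)), φ.normed volume u * σ (l*x + t - u))
          - φ.normed volume (tp j) * σ (l*x + t - tp j) * h| := Finset.abs_sum_le_sum_abs _ _
      _ ≤ ∑ _j ∈ range N, ε' * h := Finset.sum_le_sum (fun j hj => hstep j (Finset.mem_range.mp hj))
      _ = (N:ℝ) * (ε' * h) := by rw [Finset.sum_const, Finset.card_range, nsmul_eq_mul]
  have hdiff : ∑ j ∈ range N, (∫ u in (tp j)..(tp (j+1)), φ.normed volume u * σ (l*x + t - u))
      - ∑ j ∈ range N, φ.normed volume (tp j) * σ (l*x + t - tp j) * h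
      = ∑ j ∈ range N, ((∫ u in (tp j)..(tp (j+1)), φ.normed volume u * σ (l*x + t - u))
        - φ.normed volume (tp j) * σ (l*x + t - tp j) * h) := (Finset.sum_sub_distrib _ _).symm
  rw [← hdiff] at htotal
  have hfinal : (N:ℝ) * (ε' * h) < ε := by
    have : (N:ℝ) * (ε' * h) = ε' * (2*M) := by
      rw [hhdef]
      field_simp
    rw [this, hε'def]
    rw [div_mul_eq_mul_div, div_lt_iff₀ (by linarith)]
    nlinarith
  exact lt_of_le_of_lt htotal hfinal

lemma approx_pow_mul_iteratedDeriv (ψ : ℝ → ℝ) (hψ : ContDiff ℝ (⊤:ℕ∞) ψ)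
    (hbase : ∀ l t : ℝ, Approx σ a b (fun x => ψ (l*x + t))) :
    ∀ (n : ℕ) (l t : ℝ), Approx σ a b (fun x => x^n * iteratedDeriv n ψ (l*x + t)) := by
  have hcont : ∀ m : ℕ, Continuous (iteratedDeriv m ψ) := by
    intro m
    exact hψ.continuous_iteratedDeriv m (by exact_mod_cast le_top)
  have hdiffble : ∀ m : ℕ, Differentiable ℝ (iteratedDeriv m ψ) := by
    intro m
    have hm : (m:ℕ∞) < (⊤:ℕ∞) := by exact_mod_cast lt_top_iff_ne_top.mpr (by simp)
    exact hψ.differentiable_iteratedDeriv m (by exact_mod_cast WithTop.coe_lt_coe.mpr hm)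
  intro n
  induction n with
  | zero =>
    intro l t
    exact approx_congr (fun x _ => by simp) (hbase l t)
  | succ m ih =>
    intro l t
    set g := iteratedDeriv m ψ with hgdef
    set g' := iteratedDeriv (m+1) ψ with hg'def
    have hg'eq : g' = deriv g := iteratedDeriv_succ
    apply approx_of_close
    intro ε hε
    set R : ℝ := max |a| |b| + 1 with hRdef
    have hR : 0 < R := by positivity
    have hxR : ∀ x ∈ Set.Icc a b, |x| ≤ R := by
      intro x hx
      rw [hRdef]
      have h1 : |x| ≤ max |a| |b| := by
        rw [abs_le]
        constructor
        · have := neg_abs_le a; have := le_max_left |a| |b|; linarith [hx.1]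
        · have := le_abs_self b; have := le_max_right |a| |b|; linarith [hx.2]
      linarith
    set K : ℝ := (|l|+1)*R + |t| with hKdef
    set ε₁ : ℝ := ε / (2*(R^(m+1)+1)) with hε₁def
    have hε₁ : 0 < ε₁ := by positivity
    obtain ⟨δ, hδ, hUC⟩ := Metric.uniformContinuousOn_iff.mp
      (isCompact_Icc.uniformContinuousOn_of_continuous
        ((hcont (m+1)).continuousOn (s := Set.Icc (-K) K))) ε₁ hε₁
    set h : ℝ := min 1 (δ/(2*(R+1))) with hhdef
    have hh : 0 < h := lt_min one_pos (by positivity)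
    have hh1 : h ≤ 1 := min_le_left _ _
    have hhδ : h * R < δ := by
      have h2 : h ≤ δ/(2*(R+1)) := min_le_right _ _
      have h3 : h * R ≤ δ/(2*(R+1)) * R := mul_le_mul_of_nonneg_right h2 (le_of_lt hR)
      have hlt : δ/(2*(R+1)) * R < δ := by
        rw [div_mul_eq_mul_div, div_lt_iff₀ (by linarith)]
        nlinarith
      exact lt_of_le_of_lt h3 hlt
    refine ⟨fun x => (1/h) * ((x^m * g ((l+h)*x + t)) - (x^m * g (l*x + t))), ?_, ?_⟩
    · exact approx_smul (1/h) (approx_sub (ih (l+h) t) (ih l t))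
    · intro x hx
      beta_reduce
      have hxR' := hxR x hx
      set u : ℝ := l*x + t with hudef
      set w : ℝ := (l+h)*x + t with hwdef
      have hwu : w - u = h * x := by rw [hwdef, hudef]; ring
      have huK : |u| ≤ K := by
        rw [hudef, hKdef]
        have h1 : |l * x + t| ≤ |l * x| + |t| := abs_add_le _ _
        have h2 : |l * x| = |l| * |x| := abs_mul _ _
        have h3 : |l| * |x| ≤ |l| * R := mul_le_mul_of_nonneg_left hxR' (abs_nonneg l)
        nlinarith [abs_nonneg l]
      have hwK : |w| ≤ K := by
        rw [hwdef, hKdef]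
        have h1 : |(l + h) * x + t| ≤ |(l + h) * x| + |t| := abs_add_le _ _
        have h2 : |(l + h) * x| = |l + h| * |x| := abs_mul _ _
        have hlh : |l + h| ≤ |l| + 1 := by
          have h4 : |l + h| ≤ |l| + |h| := abs_add_le _ _
          have h5 : |h| = h := abs_of_pos hh
          linarith
        have h3 : |l + h| * |x| ≤ (|l| + 1) * R :=
          mul_le_mul hlh hxR' (abs_nonneg x) (by positivity)
        nlinarith
      have hwuabs : |w - u| ≤ h * R := by
        rw [hwu, abs_mul, abs_of_pos hh]
        nlinarith [abs_nonneg x]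
      clear_value R K ε₁ h u w
      have hftc : ∫ v in u..w, g' v = g w - g u := by
        rw [hg'eq]
        exact intervalIntegral.integral_deriv_eq_sub (fun y _ => (hdiffble m) y)
          (by rw [← hg'eq]; exact (hcont (m+1)).intervalIntegrable _ _)
      have hsub : ∫ v in u..w, (g' v - g' u) = (g w - g u) - (w - u) * g' u := by
        rw [intervalIntegral.integral_sub ((hcont (m+1)).intervalIntegrable _ _)
          intervalIntegrable_const, hftc, intervalIntegral.integral_const, smul_eq_mul]
      have hbnd : |∫ v in u..w, (g' v - g' u)| ≤ ε₁ * |w - u| := by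
        rw [← Real.norm_eq_abs]
        apply intervalIntegral.norm_integral_le_of_norm_le_const
        intro v hv
        have hKu := abs_le.mp huK
        have hKw := abs_le.mp hwK
        have hwud := abs_le.mp hwuabs
        have hvmem : v ∈ Set.Icc (-K) K := by
          rcases Set.mem_uIoc.mp hv with ⟨h1, h2⟩ | ⟨h1, h2⟩
          · exact ⟨by linarith, by linarith⟩
          · exact ⟨by linarith, by linarith⟩
        have humem : u ∈ Set.Icc (-K) K := ⟨by linarith, by linarith⟩
        have hdist : dist v u < δ := by
          rw [Real.dist_eq]
          have habs : |v - u| ≤ h * R := by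
            rcases Set.mem_uIoc.mp hv with ⟨h1, h2⟩ | ⟨h1, h2⟩
            · rw [abs_of_pos (by linarith)]
              have := le_abs_self (w - u)
              linarith
            · rw [abs_of_nonpos (by linarith)]
              have := neg_abs_le (w - u)
              linarith
          linarith
        have := hUC v hvmem u humem hdist
        rw [Real.dist_eq] at this
        exact le_of_lt this
      have key : x^(m+1) * g' u - (1/h) * ((x^m * g w) - x^m * g u)
          = (1/h) * (x^m * (-(∫ v in u..w, (g' v - g' u)))) := by
        rw [hsub, hwu]
        field_simp
        ring
      rw [key]
      have habs1 : |(1/h) * (x^m * (-(∫ v in u..w, (g' v - g' u))))|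
          = (1/h) * (|x|^m * |∫ v in u..w, (g' v - g' u)|) := by
        rw [abs_mul, abs_mul, abs_neg, abs_pow, abs_of_pos (by positivity : (0:ℝ) < 1/h)]
      rw [habs1]
      have hwuval : |w - u| = h * |x| := by rw [hwu, abs_mul, abs_of_pos hh]
      calc (1/h) * (|x|^m * |∫ v in u..w, (g' v - g' u)|)
          ≤ (1/h) * (|x|^m * (ε₁ * (h * |x|))) := by
            apply mul_le_mul_of_nonneg_left _ (by positivity)
            apply mul_le_mul_of_nonneg_left _ (by positivity)
            rw [← hwuval]
            exact hbnd
        _ = ε₁ * (|x|^(m+1)) := by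
            rw [pow_succ]
            field_simp
        _ ≤ ε₁ * R^(m+1) := by
            have hp : |x|^(m+1) ≤ R^(m+1) := pow_le_pow_left₀ (abs_nonneg x) hxR' (m+1)
            exact mul_le_mul_of_nonneg_left hp (le_of_lt hε₁)
        _ < ε := by
            rw [hε₁def, div_mul_eq_mul_div, div_lt_iff₀ (by positivity)]
            nlinarith [pow_pos hR (m+1)]
  done

lemma poly_of_iteratedDeriv_zero :
    ∀ (n : ℕ) (ψ : ℝ → ℝ), ContDiff ℝ (⊤:ℕ∞) ψ → (∀ u, iteratedDeriv n ψ u = 0) →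
    ∃ p : Polynomial ℝ, p.degree < (n : WithBot ℕ) ∧ ∀ x, ψ x = p.eval x := by
  intro n
  induction n with
  | zero =>
    intro ψ _ hz
    refine ⟨0, WithBot.bot_lt_coe 0, fun x => ?_⟩
    have := hz x
    rw [iteratedDeriv_zero] at this
    simp [this]
  | succ n ih =>
    intro ψ hψ hz
    have hψ' : ContDiff ℝ (⊤:ℕ∞) (deriv ψ) := (contDiff_infty_iff_deriv.mp hψ).2
    have hz' : ∀ u, iteratedDeriv n (deriv ψ) u = 0 := by
      intro u
      have := hz u
      rwa [iteratedDeriv_succ'] at this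
    obtain ⟨p, hdeg, hval⟩ := ih (deriv ψ) hψ' hz'
    set d := p.natDegree with hd
    set q : Polynomial ℝ := Polynomial.C (ψ 0)
        + ∑ i ∈ range (d+1), Polynomial.C (p.coeff i/(i+1)) * Polynomial.X^(i+1) with hq
    have hderiv : deriv ψ = fun t => p.eval t := funext hval
    have hdiffψ : Differentiable ℝ ψ := (contDiff_infty_iff_deriv.mp hψ).1
    refine ⟨q, ?_, ?_⟩
    · -- degree bound
      by_cases hp0 : p = 0
      · have hq0 : q = Polynomial.C (ψ 0) := by
          rw [hq, hp0]
          simp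
        rw [hq0]
        exact lt_of_le_of_lt (Polynomial.degree_C_le) (by exact_mod_cast WithBot.coe_lt_coe.mpr (Nat.succ_pos n))
      · have hdn : d < n := by
          rw [hd]
          exact (Polynomial.natDegree_lt_iff_degree_lt hp0).mpr hdeg
        rw [hq]
        apply lt_of_le_of_lt (Polynomial.degree_add_le _ _)
        apply max_lt
        · exact lt_of_le_of_lt (Polynomial.degree_C_le)
            (by exact_mod_cast WithBot.coe_lt_coe.mpr (Nat.succ_pos n))
        · apply lt_of_le_of_lt (Polynomial.degree_sum_le _ _)
          apply Finset.sup_lt_iff (by exact_mod_cast WithBot.bot_lt_coe (n+1)) |>.mpr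
          intro i hi
          apply lt_of_le_of_lt (Polynomial.degree_C_mul_X_pow_le _ _)
          have : i + 1 < n + 1 := by
            have := Finset.mem_range.mp hi
            omega
          exact_mod_cast WithBot.coe_lt_coe.mpr this
    · -- values
      intro x
      have hftc : ∫ t in (0:ℝ)..x, deriv ψ t = ψ x - ψ 0 := by
        apply intervalIntegral.integral_deriv_eq_sub (fun y _ => (hdiffψ y))
        rw [hderiv]
        exact (Polynomial.continuous_aeval p).intervalIntegrable _ _
      have hpint : ∫ t in (0:ℝ)..x, deriv ψ t
          = ∑ i ∈ range (d+1), p.coeff i * (x^(i+1)/(i+1)) := by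
        rw [hderiv]
        have hev : ∀ t : ℝ, p.eval t = ∑ i ∈ range (d+1), p.coeff i * t^i := by
          intro t
          exact Polynomial.eval_eq_sum_range (p := p) t
        simp only [hev]
        rw [intervalIntegral.integral_finset_sum (f := fun i t => p.coeff i * t^i)
          (fun i _ => ((continuous_const.mul (continuous_pow i)).intervalIntegrable _ _))]
        refine Finset.sum_congr rfl fun i _ => ?_
        rw [intervalIntegral.integral_const_mul, integral_pow]
        norm_num
      have hqev : q.eval x = ψ 0 + ∑ i ∈ range (d+1), p.coeff i/(i+1) * x^(i+1) := by
        rw [hq]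
        simp [Polynomial.eval_finset_sum]
      rw [hqev]
      have : ψ x = ψ 0 + ∑ i ∈ range (d+1), p.coeff i * (x^(i+1)/(i+1)) := by
        rw [← hpint, hftc]; ring
      rw [this]
      congr 1
      refine Finset.sum_congr rfl fun i _ => ?_
      ring

noncomputable def bump (i : ℕ) : ContDiffBump (0:ℝ) :=
  ⟨((i:ℝ)+1)⁻¹, 2*((i:ℝ)+1)⁻¹, by positivity, by
    have h : (0:ℝ) < ((i:ℝ)+1)⁻¹ := by positivity
    linarith⟩

lemma bump_rOut_tendsto : Tendsto (fun i : ℕ => (bump i).rOut) atTop (𝓝 0) := by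
  have h1 : Tendsto (fun i : ℕ => ((i:ℝ)+1)) atTop atTop :=
    tendsto_atTop_add_const_right _ 1 tendsto_natCast_atTop_atTop
  have h2 : Tendsto (fun i : ℕ => ((i:ℝ)+1)⁻¹) atTop (𝓝 0) := h1.inv_tendsto_atTop
  have h3 := h2.const_mul (2:ℝ)
  rw [mul_zero] at h3
  exact h3

/-- If every mollification of `σ` is a polynomial of degree `< n`,
then `σ` itself is a polynomial. -/
lemma poly_of_all_mollified (σ : ℝ → ℝ) (hσ : Continuous σ) (n : ℕ)
    (hall : ∀ i : ℕ, ∃ p : Polynomial ℝ, p.degree < (n : WithBot ℕ) ∧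
      ∀ x, ((bump i).normed volume ⋆[ContinuousLinearMap.lsmul ℝ ℝ, volume] σ) x = p.eval x) :
    ∃ p : Polynomial ℝ, ∀ x, σ x = p.eval x := by
  classical
  set ψ : ℕ → ℝ → ℝ :=
    fun i => (bump i).normed volume ⋆[ContinuousLinearMap.lsmul ℝ ℝ, volume] σ with hψ
  choose p hpdeg hpval using hall
  have htend : ∀ x : ℝ, Tendsto (fun i => ψ i x) atTop (𝓝 (σ x)) := by
    intro x
    exact ContDiffBump.convolution_tendsto_right_of_continuous bump_rOut_tendsto hσ x
  -- interpolation nodes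
  set s : Finset ℝ := (Finset.range n).image (Nat.cast : ℕ → ℝ) with hs
  have hcard : s.card = n := by
    rw [hs, Finset.card_image_of_injective _ Nat.cast_injective, Finset.card_range]
  have hinj : Set.InjOn (id : ℝ → ℝ) ↑s := fun x _ y _ h => h
  have hrepr : ∀ i : ℕ, p i = Lagrange.interpolate s id (fun z => (p i).eval z) := by
    intro i
    have hd : (p i).degree < (s.card : WithBot ℕ) := by rw [hcard]; exact hpdeg i
    have := Lagrange.eq_interpolate (f := p i) hinj hd
    simpa using this
  set q : Polynomial ℝ := Lagrange.interpolate s id σ with hq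
  refine ⟨q, fun x => ?_⟩
  -- evaluate the interpolation formula at x and pass to the limit
  have hevalformula : ∀ (r : ℝ → ℝ),
      (Lagrange.interpolate s id r).eval x = ∑ z ∈ s, r z * (Lagrange.basis s id z).eval x := by
    intro r
    rw [Lagrange.interpolate_apply]
    rw [Polynomial.eval_finset_sum]
    exact Finset.sum_congr rfl fun z _ => by rw [Polynomial.eval_mul, Polynomial.eval_C]
  have hlim1 : Tendsto (fun i => (p i).eval x) atTop (𝓝 (σ x)) := by
    have : (fun i => (p i).eval x) = fun i => ψ i x := by
      funext i
      rw [← hpval i x]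
    rw [this]
    exact htend x
  have hlim2 : Tendsto (fun i => (p i).eval x) atTop (𝓝 (q.eval x)) := by
    have heq : ∀ i, (p i).eval x = ∑ z ∈ s, (p i).eval z * (Lagrange.basis s id z).eval x := by
      intro i
      conv_lhs => rw [hrepr i]
      exact hevalformula _
    simp only [heq]
    have hqx : q.eval x = ∑ z ∈ s, σ z * (Lagrange.basis s id z).eval x := hevalformula σ
    rw [hqx]
    apply tendsto_finset_sum
    intro z hz
    apply Tendsto.mul_const
    have : (fun i => (p i).eval z) = fun i => ψ i z := by
      funext i
      rw [← hpval i z]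
    rw [this]
    exact htend z
  exact tendsto_nhds_unique hlim1 hlim2

end Machinery

end TWaux

open MeasureTheory Convolution in
/-- **Sufficient condition for Tauber–Wiener functions** (Chen & Chen).
If `σ : ℝ → ℝ` is continuous of at most polynomial growth (hence a tempered
distribution on `ℝ`), then `σ` is Tauber–Wiener if and only if `σ` is not a
polynomial. -/
theorem isTauberWiener_iff_not_polynomial
    (σ : ℝ → ℝ) (hcont : Continuous σ)
    (C : ℝ) (hC : 0 < C) (k : ℕ) (hgrowth : ∀ x : ℝ, |σ x| ≤ C * (1 + |x|) ^ k) :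
    IsTauberWiener σ ↔ ¬∃ p : Polynomial ℝ, ∀ x : ℝ, σ x = p.eval x := by
  constructor
  · rintro hTW ⟨p, hp⟩
    exact TWaux.not_TW_of_poly σ p hp hTW
  · intro hnp
    intro a b hab f hf ε hε
    have hloc : LocallyIntegrable σ volume := hcont.locallyIntegrable
    have hsmooth : ∀ φ : ContDiffBump (0:ℝ),
        ContDiff ℝ (⊤:ℕ∞) (φ.normed volume ⋆[ContinuousLinearMap.lsmul ℝ ℝ, volume] σ) :=
      fun φ => HasCompactSupport.contDiff_convolution_left _ φ.hasCompactSupport_normed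
        φ.contDiff_normed hloc
    have hpow : ∀ n : ℕ, TWaux.Approx σ a b (fun x => x^n) := by
      intro n
      by_cases hvan : ∀ (φ : ContDiffBump (0:ℝ)) (u : ℝ),
          iteratedDeriv n (φ.normed volume ⋆[ContinuousLinearMap.lsmul ℝ ℝ, volume] σ) u = 0
      · exact absurd (TWaux.poly_of_all_mollified σ hcont n (fun i =>
          TWaux.poly_of_iteratedDeriv_zero n _ (hsmooth _) (hvan (TWaux.bump i)))) hnp
      · push_neg at hvan
        obtain ⟨φ, u, hne⟩ := hvan
        have hbase := TWaux.approx_conv σ hcont a b φ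
        have h1 := TWaux.approx_pow_mul_iteratedDeriv _ (hsmooth φ) hbase n 0 u
        have h2 := TWaux.approx_smul
          (iteratedDeriv n (φ.normed volume ⋆[ContinuousLinearMap.lsmul ℝ ℝ, volume] σ) u)⁻¹ h1
        apply TWaux.approx_congr _ h2
        intro x _
        rw [zero_mul, zero_add]
        field_simp
    have hpoly : ∀ p : Polynomial ℝ, TWaux.Approx σ a b (fun x => p.eval x) := by
      intro p
      have hs := TWaux.approx_finsetSum (Finset.range (p.natDegree+1))
        (F := fun i x => p.coeff i * x^i) (fun i _ => TWaux.approx_smul _ (hpow i))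
      apply TWaux.approx_congr _ hs
      intro x _
      exact (Polynomial.eval_eq_sum_range (p := p) x).symm
    have hA : TWaux.Approx σ a b f := by
      apply TWaux.approx_of_close
      intro ε' hε'
      obtain ⟨p, hp⟩ := exists_polynomial_near_of_continuousOn a b f hf ε' hε'
      exact ⟨fun x => p.eval x, hpoly p, fun x hx => by rw [abs_sub_comm]; exact hp x hx⟩
    exact hA ε hε
end

section
/- The hyperbolic tangent function tanh : ℝ → ℝ and the ReLU function x ↦ max(x, 0) are both Tauber–Wiener functions; that is, for every pair of reals a < b, the finite linear combinations x ↦ Σ_{i=1}^N c_i tanh(λ_i x + θ_i) (respectively x ↦ Σ_{i=1}^N c_i max(λ_i x + θ_i, 0)) with c_i, λ_i, θ_i ∈ ℝ are dense in C([a,b]) with the sup-norm. -/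
set_option maxHeartbeats 1000000


def TWspan (σ : ℝ → ℝ) : Submodule ℝ (ℝ → ℝ) :=
  Submodule.span ℝ {g : ℝ → ℝ | ∃ l t : ℝ, g = fun x => σ (l * x + t)}

lemma tanh_formula (x : ℝ) : Real.tanh x = 1 - 2 / (Real.exp (2*x) + 1) := by
  rw [Real.tanh_eq_sinh_div_cosh, Real.sinh_eq, Real.cosh_eq, Real.exp_neg, two_mul,
    Real.exp_add]
  have h := (Real.exp_pos x)
  have h2 : Real.exp x * Real.exp x + 1 > 0 := by positivity
  field_simp
  ring

lemma tanh_mono : Monotone Real.tanh := by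
  intro x y hxy
  rw [tanh_formula, tanh_formula]
  have h1 : Real.exp (2*x) ≤ Real.exp (2*y) := Real.exp_le_exp.2 (by linarith)
  have h2 : (0:ℝ) < Real.exp (2*x) + 1 := by positivity
  gcongr

lemma tanh_lt_one' (x : ℝ) : Real.tanh x < 1 := by
  rw [tanh_formula]
  have : (0:ℝ) < Real.exp (2*x) + 1 := by positivity
  have : 0 < 2 / (Real.exp (2*x) + 1) := by positivity
  linarith

lemma neg_one_lt_tanh' (x : ℝ) : -1 < Real.tanh x := by
  rw [tanh_formula]
  have h1 : (0:ℝ) < Real.exp (2*x) := Real.exp_pos _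
  have h2 : 2 / (Real.exp (2*x) + 1) < 2 := by
    rw [div_lt_iff₀ (by positivity)]; nlinarith
  linarith

lemma tanh_one_pos' : 0 < Real.tanh 1 := by
  rw [tanh_formula]
  have h1 : (1:ℝ) < Real.exp (2*1) := by
    rw [Real.one_lt_exp_iff]; norm_num
  have h2 : (0:ℝ) < Real.exp (2*1) + 1 := by positivity
  rw [sub_pos, div_lt_one h2]
  linarith

lemma exists_tanh_big {ε : ℝ} (hε : 0 < ε) : ∃ s : ℝ, 0 ≤ s ∧ 1 - ε ≤ Real.tanh s := by
  refine ⟨max (Real.log (2/ε) / 2) 0, le_max_right _ _, ?_⟩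
  set s := max (Real.log (2/ε) / 2) 0 with hs
  have h1 : Real.log (2/ε) ≤ 2 * s := by
    have := le_max_left (Real.log (2/ε) / 2) 0; linarith
  have h2 : 2/ε ≤ Real.exp (2*s) := by
    calc 2/ε = Real.exp (Real.log (2/ε)) := (Real.exp_log (by positivity)).symm
    _ ≤ Real.exp (2*s) := Real.exp_le_exp.2 h1
  rw [tanh_formula]
  have h3 : 2 / (Real.exp (2*s) + 1) ≤ ε := by
    rw [div_le_iff₀ (by positivity)]
    rw [div_le_iff₀ hε] at h2
    nlinarith
  linarith

lemma tanh_const_mem : (fun _ : ℝ => (1:ℝ)) ∈ TWspan Real.tanh := by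
  have h1 : (fun _ : ℝ => (1:ℝ))
      = (Real.tanh 1)⁻¹ • (fun x : ℝ => Real.tanh (0 * x + 1)) := by
    funext x
    simp [Pi.smul_apply, smul_eq_mul, inv_mul_cancel₀ (ne_of_gt tanh_one_pos')]
  rw [h1]
  exact Submodule.smul_mem _ _ (Submodule.subset_span ⟨0, 1, rfl⟩)

lemma tanh_step (t δ ε : ℝ) (hδ : 0 < δ) (hε : 0 < ε) :
    ∃ g : ℝ → ℝ, g ∈ TWspan Real.tanh ∧
      (∀ x, 0 ≤ g x) ∧ (∀ x, g x ≤ 1) ∧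
      (∀ x, x ≤ t - δ → g x ≤ ε) ∧ (∀ x, t + δ ≤ x → 1 - ε ≤ g x) := by
  obtain ⟨s, hs0, hsε⟩ := exists_tanh_big hε
  set k : ℝ := s / δ with hk
  have hk0 : 0 ≤ k := div_nonneg hs0 hδ.le
  have hkδ : k * δ = s := by rw [hk, div_mul_cancel₀ _ (ne_of_gt hδ)]
  refine ⟨fun x => (1 + Real.tanh (k * x + (-(k*t)))) / 2, ?_, ?_, ?_, ?_, ?_⟩
  · have heq : (fun x => (1 + Real.tanh (k * x + (-(k*t)))) / 2)
        = (2:ℝ)⁻¹ • (fun _ : ℝ => (1:ℝ)) + (2:ℝ)⁻¹ • (fun x : ℝ => Real.tanh (k * x + (-(k*t)))) := by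
      funext x
      simp only [Pi.add_apply, Pi.smul_apply, smul_eq_mul]
      ring
    rw [heq]
    exact add_mem (Submodule.smul_mem _ _ tanh_const_mem)
      (Submodule.smul_mem _ _ (Submodule.subset_span ⟨k, -(k*t), rfl⟩))
  · intro x; have := neg_one_lt_tanh' (k * x + (-(k*t))); linarith
  · intro x; have := tanh_lt_one' (k * x + (-(k*t))); linarith
  · intro x hx
    have harg : k * x + (-(k*t)) ≤ -s := by nlinarith
    have h2 : Real.tanh (k * x + (-(k*t))) ≤ Real.tanh (-s) := tanh_mono harg
    rw [Real.tanh_neg] at h2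
    linarith
  · intro x hx
    have harg : s ≤ k * x + (-(k*t)) := by nlinarith
    have h2 : Real.tanh s ≤ Real.tanh (k * x + (-(k*t))) := tanh_mono harg
    linarith

lemma relu_const_mem : (fun _ : ℝ => (1:ℝ)) ∈ TWspan (fun x : ℝ => max x 0) := by
  have h1 : (fun _ : ℝ => (1:ℝ)) = (fun x : ℝ => max (0 * x + 1) 0) := by
    funext x; norm_num
  rw [h1]
  exact Submodule.subset_span ⟨0, 1, rfl⟩

lemma relu_step (t δ ε : ℝ) (hδ : 0 < δ) (hε : 0 < ε) :
    ∃ g : ℝ → ℝ, g ∈ TWspan (fun x : ℝ => max x 0) ∧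
      (∀ x, 0 ≤ g x) ∧ (∀ x, g x ≤ 1) ∧
      (∀ x, x ≤ t - δ → g x ≤ ε) ∧ (∀ x, t + δ ≤ x → 1 - ε ≤ g x) := by
  refine ⟨fun x => (max (x - (t - δ)) 0 - max (x - (t + δ)) 0) / (2*δ), ?_, ?_, ?_, ?_, ?_⟩
  · have heq : (fun x : ℝ => (max (x - (t - δ)) 0 - max (x - (t + δ)) 0) / (2*δ))
        = (2*δ)⁻¹ • (fun x : ℝ => max (1 * x + (δ - t)) 0)
          - (2*δ)⁻¹ • (fun x : ℝ => max (1 * x + (-δ - t)) 0) := by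
      funext x
      have e1 : x - (t - δ) = 1 * x + (δ - t) := by ring
      have e2 : x - (t + δ) = 1 * x + (-δ - t) := by ring
      simp only [Pi.sub_apply, Pi.smul_apply, smul_eq_mul, ← e1, ← e2]
      ring
    rw [heq]
    exact sub_mem (Submodule.smul_mem _ _ (Submodule.subset_span ⟨1, δ - t, rfl⟩))
      (Submodule.smul_mem _ _ (Submodule.subset_span ⟨1, -δ - t, rfl⟩))
  · intro x
    apply div_nonneg _ (by linarith)
    have : max (x - (t + δ)) 0 ≤ max (x - (t - δ)) 0 :=
      max_le_max (by linarith) le_rfl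
    linarith
  · intro x
    rw [div_le_one (by linarith)]
    rcases le_total (x - (t - δ)) 0 with h1 | h1
    · rw [max_eq_right h1, max_eq_right (by linarith)]; linarith
    · rw [max_eq_left h1]
      rcases le_total (x - (t + δ)) 0 with h2 | h2
      · rw [max_eq_right h2]; linarith
      · rw [max_eq_left h2]; linarith
  · intro x hx
    dsimp only
    rw [max_eq_right (by linarith), max_eq_right (by linarith)]
    norm_num
    positivity
  · intro x hx
    dsimp only
    rw [max_eq_left (by linarith), max_eq_left (by linarith)]
    have : (x - (t - δ) - (x - (t + δ))) / (2*δ) = 1 := by field_simp; ring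
    rw [this]
    linarith

lemma TWspan_exists {σ F : ℝ → ℝ} (hF : F ∈ TWspan σ) :
    ∃ (N : ℕ) (c lam θ : Fin N → ℝ),
      ∀ x : ℝ, F x = ∑ i, c i * σ (lam i * x + θ i) := by
  rw [TWspan, Submodule.mem_span_set'] at hF
  obtain ⟨n, c, g, hg⟩ := hF
  choose lam θ hlt using fun i => (g i).2
  refine ⟨n, c, lam, θ, fun x => ?_⟩
  rw [← hg]
  simp only [Finset.sum_apply, Pi.smul_apply, smul_eq_mul]
  exact Finset.sum_congr rfl (fun i _ => by rw [hlt i])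


lemma main_TW (σ : ℝ → ℝ)
    (hconst : (fun _ : ℝ => (1:ℝ)) ∈ TWspan σ)
    (hstep : ∀ t δ ε : ℝ, 0 < δ → 0 < ε → ∃ g : ℝ → ℝ, g ∈ TWspan σ ∧
        (∀ x, 0 ≤ g x) ∧ (∀ x, g x ≤ 1) ∧
        (∀ x, x ≤ t - δ → g x ≤ ε) ∧ (∀ x, t + δ ≤ x → 1 - ε ≤ g x)) :
    IsTauberWiener σ := by
  intro a b hab f hf ε hε
  have huc := (isCompact_Icc (a := a) (b := b)).uniformContinuousOn_of_continuous hf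
  rw [Metric.uniformContinuousOn_iff] at huc
  obtain ⟨δ, hδ, hucf⟩ := huc (ε/4) (by linarith)
  obtain ⟨n₀, hn₀⟩ := exists_nat_gt ((b - a) / δ)
  set n : ℕ := n₀ + 1 with hn
  have hnpos : (0:ℝ) < (n:ℝ) := by positivity
  set h : ℝ := (b - a) / n with hh
  have hhpos : 0 < h := div_pos (by linarith) hnpos
  have hhδ : h < δ := by
    rw [hh, div_lt_iff₀ hnpos]
    have h1 : (b - a) / δ < (n:ℝ) := lt_of_lt_of_le hn₀ (by exact_mod_cast Nat.le_succ n₀)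
    calc b - a = (b - a) / δ * δ := by field_simp
      _ < (n:ℝ) * δ := by exact mul_lt_mul_of_pos_right h1 hδ
      _ = δ * n := mul_comm _ _
  set t : ℕ → ℝ := fun j => a + j * h with ht
  have htn : t n = b := by rw [ht]; simp only []; rw [hh]; field_simp; ring
  have htmem : ∀ j : ℕ, j ≤ n → t j ∈ Set.Icc a b := by
    intro j hj
    constructor
    · rw [ht]; simp only []; nlinarith [Nat.cast_nonneg (α := ℝ) j]
    · rw [← htn, ht]; simp only []
      have : (j:ℝ) ≤ n := by exact_mod_cast hj
      nlinarith
  set E : ℝ := ∑ j ∈ Finset.range n, |f (t (j+1)) - f (t j)| with hE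
  have hEnn : 0 ≤ E := Finset.sum_nonneg fun j _ => abs_nonneg _
  set ε₂ : ℝ := ε / (4 * (E + 1)) with hε₂def
  have hε₂ : 0 < ε₂ := by rw [hε₂def]; positivity
  choose g hgmem hg0 hg1 hglo hghi using
    fun j : ℕ => hstep (t (j+1)) (h/2) ε₂ (by positivity) hε₂
  set F : ℝ → ℝ := fun x => f a + ∑ j ∈ Finset.range n, (f (t (j+1)) - f (t j)) * g j x
    with hF
  have hFmem : F ∈ TWspan σ := by
    have hFeq : F = f a • (fun _ : ℝ => (1:ℝ)) +
        ∑ j ∈ Finset.range n, (f (t (j+1)) - f (t j)) • g j := by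
      funext x
      simp [hF, Finset.sum_apply]
    rw [hFeq]
    exact add_mem (Submodule.smul_mem _ _ hconst)
      (Submodule.sum_mem _ fun j _ => Submodule.smul_mem _ _ (hgmem j))
  obtain ⟨N, c, lam, θ, hrep⟩ := TWspan_exists hFmem
  refine ⟨N, c, lam, θ, fun x hx => ?_⟩
  rw [← hrep x]
  -- now the analytic bound
  set m : ℕ := ⌊(x - a) / h⌋₊ with hm
  have hxa : 0 ≤ (x - a) / h := div_nonneg (by linarith [hx.1]) hhpos.le
  have hm0 : (m:ℝ) ≤ (x - a) / h := Nat.floor_le hxa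
  have hmn : m ≤ n := by
    have h1 : (x - a) / h ≤ (n:ℝ) := by
      rw [div_le_iff₀ hhpos]
      have := hx.2
      rw [← htn] at this
      simp only [ht] at this
      linarith
    calc m = ⌊(x - a)/h⌋₊ := hm
      _ ≤ ⌊((n:ℝ))⌋₊ := Nat.floor_le_floor h1
      _ = n := Nat.floor_natCast n
  have htmx : t m ≤ x := by
    rw [ht]; simp only []
    rw [le_div_iff₀ hhpos] at hm0
    linarith
  have hxtm : x - t m < h := by
    have h1 : (x - a) / h < (m:ℝ) + 1 := Nat.lt_floor_add_one _
    rw [div_lt_iff₀ hhpos] at h1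
    rw [ht]; simp only []
    nlinarith
  have hA : |f x - f (t m)| < ε / 4 := by
    have := hucf x hx (t m) (htmem m hmn) (by
      rw [Real.dist_eq]
      rw [abs_of_nonneg (by linarith)]
      linarith)
    rwa [Real.dist_eq] at this
  -- step indicator sum
  have hχsum : ∑ j ∈ Finset.range n, (f (t (j+1)) - f (t j)) * (if j < m then (1:ℝ) else 0)
      = f (t m) - f a := by
    have h1 : ∀ j ∈ Finset.range n, (f (t (j+1)) - f (t j)) * (if j < m then (1:ℝ) else 0)
        = if j < m then f (t (j+1)) - f (t j) else 0 := by
      intro j _; split <;> ring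
    rw [Finset.sum_congr rfl h1]
    rw [← Finset.sum_subset (Finset.range_subset_range.2 hmn)
      (fun j _ hj => if_neg (by simpa using hj))]
    rw [Finset.sum_congr rfl (fun j hj => if_pos (Finset.mem_range.1 hj))]
    have h0 : t 0 = a := by rw [ht]; simp
    rw [← h0]
    exact Finset.sum_range_sub (fun j => f (t j)) m
  have hkey : f x - F x = (f x - f (t m)) +
      ∑ j ∈ Finset.range n, (f (t (j+1)) - f (t j)) * ((if j < m then (1:ℝ) else 0) - g j x) := by
    have h2 : ∑ j ∈ Finset.range n, (f (t (j+1)) - f (t j)) * ((if j < m then (1:ℝ) else 0) - g j x)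
        = (∑ j ∈ Finset.range n, (f (t (j+1)) - f (t j)) * (if j < m then (1:ℝ) else 0))
          - ∑ j ∈ Finset.range n, (f (t (j+1)) - f (t j)) * g j x := by
      rw [← Finset.sum_sub_distrib]
      exact Finset.sum_congr rfl fun j _ => by ring
    rw [h2, hχsum, hF]
    simp only []
    ring
  -- split the sum into close and far parts
  have hsplit := Finset.sum_filter_add_sum_filter_not (Finset.range n)
    (fun j => j + 1 = m ∨ j = m)
    (fun j => (f (t (j+1)) - f (t j)) * ((if j < m then (1:ℝ) else 0) - g j x))
  -- far bound
  have hfar : |∑ j ∈ Finset.filter (fun j => ¬ (j + 1 = m ∨ j = m)) (Finset.range n),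
      (f (t (j+1)) - f (t j)) * ((if j < m then (1:ℝ) else 0) - g j x)| ≤ ε / 4 := by
    calc _ ≤ ∑ j ∈ Finset.filter (fun j => ¬ (j + 1 = m ∨ j = m)) (Finset.range n),
        |(f (t (j+1)) - f (t j)) * ((if j < m then (1:ℝ) else 0) - g j x)| :=
        Finset.abs_sum_le_sum_abs _ _
      _ ≤ ∑ j ∈ Finset.filter (fun j => ¬ (j + 1 = m ∨ j = m)) (Finset.range n),
          |f (t (j+1)) - f (t j)| * ε₂ := by
        apply Finset.sum_le_sum
        intro j hj
        rw [Finset.mem_filter, Finset.mem_range] at hj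
        obtain ⟨hjn, hnP⟩ := hj
        rw [abs_mul]
        apply mul_le_mul_of_nonneg_left _ (abs_nonneg _)
        have hcases : j + 1 < m ∨ m < j := by omega
        rcases hcases with hc | hc
        · rw [if_pos (by omega)]
          have harg : t (j+1) + h/2 ≤ x := by
            have hjm : (j:ℝ) + 2 ≤ (m:ℝ) := by exact_mod_cast hc
            have : t (j+1) = a + ((j:ℝ)+1) * h := by rw [ht]; push_cast; ring
            rw [this]
            have htm : t m = a + (m:ℝ) * h := rfl
            nlinarith [htmx]
          have := hghi j x harg
          have := hg1 j x
          rw [abs_le]; constructor <;> linarith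
        · rw [if_neg (by omega)]
          have harg : x ≤ t (j+1) - h/2 := by
            have hjm : (m:ℝ) + 1 ≤ (j:ℝ) := by exact_mod_cast hc
            have h3 : t (j+1) = a + ((j:ℝ)+1) * h := by rw [ht]; push_cast; ring
            rw [h3]
            have htm : t m = a + (m:ℝ) * h := rfl
            rw [htm] at hxtm
            nlinarith
          have := hglo j x harg
          have := hg0 j x
          rw [abs_le]; constructor <;> linarith
      _ = (∑ j ∈ Finset.filter (fun j => ¬ (j + 1 = m ∨ j = m)) (Finset.range n),
          |f (t (j+1)) - f (t j)|) * ε₂ := by rw [Finset.sum_mul]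
      _ ≤ E * ε₂ := by
        apply mul_le_mul_of_nonneg_right _ hε₂.le
        rw [hE]
        exact Finset.sum_le_sum_of_subset_of_nonneg (Finset.filter_subset _ _)
          (fun j _ _ => abs_nonneg _)
      _ ≤ ε / 4 := by
        rw [hε₂def, mul_comm, div_mul_eq_mul_div,
          div_le_div_iff₀ (by positivity) (by norm_num)]
        nlinarith
  -- close bound
  have hclose : |∑ j ∈ Finset.filter (fun j => j + 1 = m ∨ j = m) (Finset.range n),
      (f (t (j+1)) - f (t j)) * ((if j < m then (1:ℝ) else 0) - g j x)| ≤ ε / 2 := by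
    have hcard : (Finset.filter (fun j => j + 1 = m ∨ j = m) (Finset.range n)).card ≤ 2 := by
      have hsub : Finset.filter (fun j => j + 1 = m ∨ j = m) (Finset.range n) ⊆ {m - 1, m} := by
        intro j hj
        rw [Finset.mem_filter] at hj
        rcases hj.2 with hc | hc
        · simp only [Finset.mem_insert, Finset.mem_singleton]; left; omega
        · simp only [Finset.mem_insert, Finset.mem_singleton]; right; exact hc
      calc (Finset.filter (fun j => j + 1 = m ∨ j = m) (Finset.range n)).card ≤ ({m-1, m} : Finset ℕ).card :=
          Finset.card_le_card hsub
        _ ≤ 2 := by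
          apply le_trans (Finset.card_insert_le _ _)
          simp
    calc _ ≤ ∑ j ∈ Finset.filter (fun j => j + 1 = m ∨ j = m) (Finset.range n),
        |(f (t (j+1)) - f (t j)) * ((if j < m then (1:ℝ) else 0) - g j x)| :=
        Finset.abs_sum_le_sum_abs _ _
      _ ≤ (Finset.filter (fun j => j + 1 = m ∨ j = m) (Finset.range n)).card • (ε/4) := by
        apply Finset.sum_le_card_nsmul
        intro j hj
        rw [Finset.mem_filter, Finset.mem_range] at hj
        have hΔ : |f (t (j+1)) - f (t j)| ≤ ε / 4 := by
          have := hucf (t (j+1)) (htmem (j+1) hj.1) (t j) (htmem j (le_of_lt hj.1)) (by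
            rw [Real.dist_eq]
            have h3 : t (j+1) - t j = h := by rw [ht]; push_cast; ring
            rw [h3, abs_of_pos hhpos]; exact hhδ)
          rw [Real.dist_eq] at this
          linarith
        have hχg : |(if j < m then (1:ℝ) else 0) - g j x| ≤ 1 := by
          have := hg0 j x
          have := hg1 j x
          split <;> (rw [abs_le]; constructor <;> linarith)
        calc |(f (t (j+1)) - f (t j)) * ((if j < m then (1:ℝ) else 0) - g j x)|
            = |f (t (j+1)) - f (t j)| * |(if j < m then (1:ℝ) else 0) - g j x| := abs_mul _ _
          _ ≤ (ε/4) * 1 := mul_le_mul hΔ hχg (abs_nonneg _) (by linarith)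
          _ = ε / 4 := by ring
      _ ≤ 2 * (ε/4) := by
        rw [nsmul_eq_mul]
        apply mul_le_mul_of_nonneg_right _ (by linarith)
        exact_mod_cast hcard
      _ = ε / 2 := by ring
  -- combine
  have hS : |∑ j ∈ Finset.range n, (f (t (j+1)) - f (t j)) *
      ((if j < m then (1:ℝ) else 0) - g j x)| ≤ ε/2 + ε/4 := by
    rw [← hsplit]
    calc _ ≤ _ := abs_add_le _ _
      _ ≤ ε/2 + ε/4 := add_le_add hclose hfar
  calc |f x - F x| = |(f x - f (t m)) + ∑ j ∈ Finset.range n,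
      (f (t (j+1)) - f (t j)) * ((if j < m then (1:ℝ) else 0) - g j x)| := by rw [hkey]
    _ ≤ |f x - f (t m)| + |∑ j ∈ Finset.range n,
      (f (t (j+1)) - f (t j)) * ((if j < m then (1:ℝ) else 0) - g j x)| := abs_add_le _ _
    _ < ε/4 + (ε/2 + ε/4) := by linarith [hA, hS]
    _ = ε := by ring

/-- The hyperbolic tangent and the ReLU function `x ↦ max(x, 0)` are both
Tauber–Wiener functions. -/
theorem tanh_and_relu_isTauberWiener :
    IsTauberWiener Real.tanh ∧ IsTauberWiener (fun x : ℝ => max x 0) :=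
  ⟨main_TW _ tanh_const_mem tanh_step, main_TW _ relu_const_mem relu_step⟩
end

section
/- Let a < b be reals, let V be a compact subset of C([a,b]) with the sup-norm, and for each positive integer m let L_m be the piecewise linear interpolation operator at the uniform nodes x_j = a + j(b−a)/m. Set U_m = L_m(V), W_m = V ∪ U_m, and W = ⋃_{i=1}^∞ W_i. Then W is uniformly bounded and equicontinuous: there is M such that |u(x)| ≤ M for all u ∈ W and x ∈ [a,b], and for every ε > 0 there is δ > 0 such that |x − y| < δ implies |u(x) − u(y)| < ε for all u ∈ W and all x, y ∈ [a,b]. In particular, W is pre-compact (has compact closure) in C([a,b]). -/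
/-- The uniform nodes `x_j = a + j(b−a)/m`, `j = 0, …, m`, of `[a,b]`. -/
noncomputable def node (a b : ℝ) (m j : ℕ) : ℝ := a + j * (b - a) / m

lemma node_step (a b : ℝ) (i j : ℕ) :
    node a b i (j + 1) - node a b i j = (b - a) / i := by
  simp only [node]
  push_cast
  ring

lemma node_mem_Icc {a b : ℝ} (hab : a ≤ b) {i j : ℕ} (hi : 0 < i) (hj : j ≤ i) :
    node a b i j ∈ Set.Icc a b := by
  have hba : (0:ℝ) ≤ b - a := by linarith
  have hi' : (0:ℝ) < i := by exact_mod_cast hi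
  constructor
  · have : (0:ℝ) ≤ j * (b - a) / i := by positivity
    simp only [node]; linarith
  · have hji : (j:ℝ) ≤ i := by exact_mod_cast hj
    have : (j:ℝ) * (b - a) / i ≤ b - a := by
      rw [div_le_iff₀ hi']; nlinarith
    simp only [node]; linarith

lemma coe_proj {a b : ℝ} (hab : a ≤ b) {i j : ℕ} (hi : 0 < i) (hj : j ≤ i) :
    ((Set.projIcc a b hab (node a b i j) : Set.Icc a b) : ℝ) = node a b i j := by
  rw [Set.projIcc_of_mem hab (node_mem_Icc hab hi hj)]

lemma exists_interval {a b : ℝ} (hab : a < b) {i : ℕ} (hi : 0 < i)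
    {x : ℝ} (hx : x ∈ Set.Icc a b) :
    ∃ j : ℕ, j < i ∧ node a b i j ≤ x ∧ x ≤ node a b i (j + 1) := by
  have hba : (0:ℝ) < b - a := by linarith
  have hi' : (0:ℝ) < i := by exact_mod_cast hi
  have hh : (0:ℝ) < (b - a) / i := by positivity
  set h : ℝ := (b - a) / i with hhdef
  have hnode : ∀ j : ℕ, node a b i j = a + j * h := fun j => by
    rw [hhdef, node, mul_div_assoc]
  set t : ℝ := (x - a) / h with htdef
  have ht0 : 0 ≤ t := div_nonneg (by linarith [hx.1]) hh.le
  have hth : t * h = x - a := div_mul_cancel₀ _ hh.ne'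
  refine ⟨min ⌊t⌋₊ (i - 1), lt_of_le_of_lt (min_le_right _ _) (Nat.sub_lt hi one_pos), ?_, ?_⟩
  · have hj : ((min ⌊t⌋₊ (i-1) : ℕ) : ℝ) ≤ t := by
      refine le_trans ?_ (Nat.floor_le ht0)
      exact_mod_cast min_le_left _ _
    have := mul_le_mul_of_nonneg_right hj hh.le
    rw [hnode]; linarith
  · by_cases hc : ⌊t⌋₊ ≤ i - 1
    · rw [min_eq_left hc, hnode]
      have : t < (⌊t⌋₊ : ℝ) + 1 := Nat.lt_floor_add_one t
      have := mul_le_mul_of_nonneg_right this.le hh.le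
      push_cast
      linarith
    · rw [min_eq_right (le_of_not_ge hc), hnode, Nat.sub_add_cancel hi]
      have : (i:ℝ) * h = b - a := by
        rw [hhdef, mul_div_assoc']; field_simp
      linarith [hx.2]

/-- `L` is the piecewise linear interpolation operator on `C([a,b])` at the uniform
nodes `x_j = a + j(b−a)/m`: for `x ∈ [x_j, x_{j+1}]`, `j = 0, …, m−1`,
`(L u)(x) = u(x_j) + ((u(x_{j+1}) − u(x_j))/(x_{j+1} − x_j))(x − x_j)`. -/
def IsLinInterp (a b : ℝ) (hab : a ≤ b) (m : ℕ)
    (L : C(Set.Icc a b, ℝ) → C(Set.Icc a b, ℝ)) : Prop :=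
  ∀ u : C(Set.Icc a b, ℝ), ∀ j : ℕ, j < m →
    ∀ x : Set.Icc a b, node a b m j ≤ (x : ℝ) → (x : ℝ) ≤ node a b m (j + 1) →
      L u x = u (Set.projIcc a b hab (node a b m j)) +
        (u (Set.projIcc a b hab (node a b m (j + 1))) -
            u (Set.projIcc a b hab (node a b m j))) /
          (node a b m (j + 1) - node a b m j) * ((x : ℝ) - node a b m j)

lemma interp_bound {a b : ℝ} (hab : a < b) {i : ℕ} (hi : 0 < i)
    {L : C(Set.Icc a b, ℝ) → C(Set.Icc a b, ℝ)} (hL : IsLinInterp a b hab.le i L)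
    (u : C(Set.Icc a b, ℝ)) {j : ℕ} (hj : j < i) (x : Set.Icc a b)
    (h1 : node a b i j ≤ (x:ℝ)) (h2 : (x:ℝ) ≤ node a b i (j+1)) (c : ℝ) :
    |L u x - c| ≤ max |u (Set.projIcc a b hab.le (node a b i j)) - c|
      |u (Set.projIcc a b hab.le (node a b i (j+1))) - c| := by
  have hi' : (0:ℝ) < i := by exact_mod_cast hi
  have hD : 0 < node a b i (j+1) - node a b i j := by
    rw [node_step]; exact div_pos (by linarith) hi'
  set A := u (Set.projIcc a b hab.le (node a b i j)) with hA
  set B := u (Set.projIcc a b hab.le (node a b i (j+1))) with hB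
  set D := node a b i (j+1) - node a b i j with hDdef
  set s : ℝ := ((x:ℝ) - node a b i j) / D with hsdef
  have hs0 : 0 ≤ s := div_nonneg (by linarith) hD.le
  have hs1 : s ≤ 1 := by rw [hsdef, div_le_one hD]; rw [hDdef]; linarith
  rw [hL u j hj x h1 h2, ← hA, ← hB, ← hDdef]
  have key : A + (B - A) / D * ((x:ℝ) - node a b i j) - c
      = (1 - s) * (A - c) + s * (B - c) := by
    rw [hsdef]; ring
  rw [key]
  calc |(1 - s) * (A - c) + s * (B - c)|
      ≤ |(1 - s) * (A - c)| + |s * (B - c)| := abs_add_le _ _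
    _ = (1 - s) * |A - c| + s * |B - c| := by
        rw [abs_mul, abs_mul, abs_of_nonneg hs0, abs_of_nonneg (by linarith : (0:ℝ) ≤ 1 - s)]
    _ ≤ (1 - s) * max |A - c| |B - c| + s * max |A - c| |B - c| := by
        exact add_le_add (mul_le_mul_of_nonneg_left (le_max_left _ _) (by linarith))
          (mul_le_mul_of_nonneg_left (le_max_right _ _) hs0)
    _ = max |A - c| |B - c| := by ring

lemma interp_lip {a b : ℝ} (hab : a < b) {i : ℕ} (hi : 0 < i)
    {L : C(Set.Icc a b, ℝ) → C(Set.Icc a b, ℝ)} (hL : IsLinInterp a b hab.le i L)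
    (u : C(Set.Icc a b, ℝ)) {j : ℕ} (hj : j < i) (x y : Set.Icc a b)
    (hxy : (x:ℝ) ≤ (y:ℝ))
    (h1 : node a b i j ≤ (x:ℝ)) (h2 : (y:ℝ) ≤ node a b i (j+1)) :
    |L u x - L u y| * ((b-a)/i)
      ≤ |u (Set.projIcc a b hab.le (node a b i (j+1))) -
          u (Set.projIcc a b hab.le (node a b i j))| * ((y:ℝ) - (x:ℝ)) := by
  have hi' : (0:ℝ) < i := by exact_mod_cast hi
  have hD : 0 < node a b i (j+1) - node a b i j := by
    rw [node_step]; exact div_pos (by linarith) hi'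
  set A := u (Set.projIcc a b hab.le (node a b i j)) with hA
  set B := u (Set.projIcc a b hab.le (node a b i (j+1))) with hB
  set D := node a b i (j+1) - node a b i j with hDdef
  have hΔ : L u x - L u y = (B - A) / D * ((x:ℝ) - (y:ℝ)) := by
    rw [hL u j hj x h1 (le_trans hxy h2), hL u j hj y (le_trans h1 hxy) h2, ← hA, ← hB, ← hDdef]
    ring
  have hDba : D = (b-a)/i := by rw [hDdef, node_step]
  rw [hΔ, abs_mul, abs_div, abs_of_pos hD, abs_sub_comm ((x:ℝ)) ((y:ℝ)),
    abs_of_nonneg (by linarith : (0:ℝ) ≤ (y:ℝ) - (x:ℝ)), ← hDba]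
  have h3 : |B - A| / D * ((y:ℝ) - (x:ℝ)) * D = |B - A| * ((y:ℝ) - (x:ℝ)) := by
    field_simp
  rw [h3]

lemma compact_equicont {a b : ℝ} {V : Set C(Set.Icc a b, ℝ)} (hV : IsCompact V)
    {ε : ℝ} (hε : 0 < ε) :
    ∃ δ : ℝ, 0 < δ ∧ ∀ u ∈ V, ∀ x y : Set.Icc a b,
      |(x:ℝ) - (y:ℝ)| < δ → |u x - u y| < ε := by
  classical
  have c1 : Continuous fun p : C(Set.Icc a b, ℝ) × Set.Icc a b × Set.Icc a b => p.1 p.2.1 := by fun_prop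
  have c2 : Continuous fun p : C(Set.Icc a b, ℝ) × Set.Icc a b × Set.Icc a b => p.1 p.2.2 := by fun_prop
  have c3 : Continuous fun p : C(Set.Icc a b, ℝ) × Set.Icc a b × Set.Icc a b => |((p.2.1 : ℝ)) - ((p.2.2 : ℝ))| := by
    fun_prop
  set S : Set (C(Set.Icc a b, ℝ) × Set.Icc a b × Set.Icc a b) :=
    {p | p.1 ∈ V ∧ ε ≤ |p.1 p.2.1 - p.1 p.2.2|} with hSdef
  have hSc : IsCompact S := by
    have hEq : S = (V ×ˢ ((Set.univ : Set (Set.Icc a b)) ×ˢ (Set.univ : Set (Set.Icc a b)))) ∩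
        {p | ε ≤ |p.1 p.2.1 - p.1 p.2.2|} := by
      ext p
      simp [hSdef, Set.mem_prod]
    rw [hEq]
    exact (hV.prod (isCompact_univ.prod isCompact_univ)).inter_right
      (isClosed_le continuous_const (c1.sub c2).abs)
  rcases S.eq_empty_or_nonempty with hS | hS
  · refine ⟨1, one_pos, fun u hu x y _ => ?_⟩
    by_contra hcon
    rw [Set.eq_empty_iff_forall_notMem] at hS
    exact hS (u, x, y) ⟨hu, le_of_not_gt hcon⟩
  · obtain ⟨p0, hp0, hmin⟩ := hSc.exists_isMinOn hS c3.continuousOn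
    refine ⟨|((p0.2.1 : ℝ)) - ((p0.2.2 : ℝ))|, ?_, ?_⟩
    · rcases (abs_nonneg (((p0.2.1 : ℝ)) - ((p0.2.2 : ℝ)))).lt_or_eq with h | h
      · exact h
      · exfalso
        have hz : ((p0.2.1 : ℝ)) = ((p0.2.2 : ℝ)) := by
          have := abs_eq_zero.mp h.symm
          linarith
        have : p0.2.1 = p0.2.2 := Subtype.ext hz
        have hε' := hp0.2
        rw [this, sub_self, abs_zero] at hε'
        linarith
    · intro u hu x y hxy
      by_contra hcon
      have hmem : (u, x, y) ∈ S := ⟨hu, le_of_not_gt hcon⟩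
      have := isMinOn_iff.mp hmin (u, x, y) hmem
      simp only at this
      linarith

/-- With `U_m = L_m(V)`, `W_m = V ∪ U_m` and `W = ⋃_{i=1}^∞ W_i`, the set `W` is
uniformly bounded and equicontinuous; in particular `W` is pre-compact (has compact
closure) in `C([a,b])`. -/
theorem W_uniformly_bounded_equicontinuous_precompact (a b : ℝ) (hab : a < b)
    (V : Set C(Set.Icc a b, ℝ)) (hV : IsCompact V)
    (L : ℕ → C(Set.Icc a b, ℝ) → C(Set.Icc a b, ℝ))
    (hL : ∀ i : ℕ, 0 < i → IsLinInterp a b hab.le i (L i))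
    (W : Set C(Set.Icc a b, ℝ))
    (hW : W = ⋃ i ∈ {i : ℕ | 1 ≤ i}, (V ∪ (L i) '' V)) :
    (∃ M : ℝ, ∀ u ∈ W, ∀ x : Set.Icc a b, |u x| ≤ M) ∧
    (∀ ε : ℝ, 0 < ε → ∃ δ : ℝ, 0 < δ ∧
      ∀ u ∈ W, ∀ x y : Set.Icc a b, |(x : ℝ) - (y : ℝ)| < δ → |u x - u y| < ε) ∧
    IsCompact (closure W) := by
  have hmem : ∀ u, u ∈ W → ∃ i, 0 < i ∧ (u ∈ V ∨ ∃ w ∈ V, L i w = u) := by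
    intro u hu
    rw [hW] at hu
    simp only [Set.mem_iUnion, Set.mem_setOf_eq, Set.mem_union, Set.mem_image] at hu
    obtain ⟨i, hi, hc⟩ := hu
    exact ⟨i, hi, by tauto⟩
  -- uniform bound
  obtain ⟨r, hr⟩ := hV.isBounded.subset_closedBall 0
  set M := max r 0 with hMdef
  have hM0 : (0:ℝ) ≤ M := le_max_right _ _
  have hMV : ∀ u ∈ V, ∀ x : Set.Icc a b, |u x| ≤ M := by
    intro u hu x
    have h1 : dist u 0 ≤ r := Metric.mem_closedBall.mp (hr hu)
    have h2 : ‖u‖ ≤ r := by rwa [dist_zero_right] at h1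
    calc |u x| = ‖u x‖ := (Real.norm_eq_abs _).symm
      _ ≤ ‖u‖ := u.norm_coe_le_norm x
      _ ≤ M := le_trans h2 (le_max_left _ _)
  have hMW : ∀ u ∈ W, ∀ x : Set.Icc a b, |u x| ≤ M := by
    intro u hu x
    obtain ⟨i, hi1, hu'⟩ := hmem u hu
    rcases hu' with h | ⟨w, hwV, rfl⟩
    · exact hMV u h x
    · obtain ⟨j, hj, h1, h2⟩ := exists_interval hab hi1 x.2
      have hb := interp_bound hab hi1 (hL i hi1) w hj x h1 h2 0
      simp only [sub_zero] at hb
      exact le_trans hb (max_le (hMV w hwV _) (hMV w hwV _))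
  -- equicontinuity
  have hEC : ∀ ε : ℝ, 0 < ε → ∃ δ : ℝ, 0 < δ ∧
      ∀ u ∈ W, ∀ x y : Set.Icc a b, |(x : ℝ) - (y : ℝ)| < δ → |u x - u y| < ε := by
    intro ε hε
    obtain ⟨δ0, hδ0pos, hδ0⟩ := compact_equicont hV (show (0:ℝ) < ε/3 by linarith)
    set δ := min (δ0/4) (ε*δ0/(24*M+24)) with hδdef
    have hδpos : 0 < δ :=
      lt_min (by linarith) (div_pos (mul_pos hε hδ0pos) (by linarith))
    have hδ1 : δ ≤ δ0/4 := min_le_left _ _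
    have hδ2 : δ * (24*M+24) ≤ ε*δ0 := by
      have hm : δ ≤ ε*δ0/(24*M+24) := min_le_right _ _
      exact (le_div_iff₀ (show (0:ℝ) < 24*M+24 by linarith)).mp hm
    refine ⟨δ, hδpos, ?_⟩
    suffices H : ∀ u ∈ W, ∀ x y : Set.Icc a b,
        (x:ℝ) ≤ (y:ℝ) → (y:ℝ) - (x:ℝ) < δ → |u x - u y| < ε by
      intro u hu x y hxy
      rcases le_total ((x:ℝ)) ((y:ℝ)) with h | h
      · refine H u hu x y h ?_
        rwa [abs_sub_comm, abs_of_nonneg (by linarith)] at hxy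
      · rw [abs_sub_comm]
        refine H u hu y x h ?_
        rwa [abs_of_nonneg (by linarith)] at hxy
    intro u hu x y hxy hd
    obtain ⟨i, hi, hu'⟩ := hmem u hu
    rcases hu' with h | ⟨w, hwV, rfl⟩
    · have h' := hδ0 u h x y (by rw [abs_sub_comm, abs_of_nonneg (by linarith)]; linarith)
      linarith
    · have hi' : (0:ℝ) < i := by exact_mod_cast hi
      have hh : 0 < (b-a)/i := div_pos (by linarith) hi'
      obtain ⟨k, hk, hk1, hk2⟩ := exists_interval hab hi y.2
      have hnkk : node a b i (k+1) = node a b i k + (b-a)/i := by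
        have := node_step a b i k; linarith
      by_cases hcase : (b-a)/i < δ0/3
      · -- fine mesh
        obtain ⟨j, hj, hj1, hj2⟩ := exists_interval hab hi x.2
        have hnjj : node a b i (j+1) = node a b i j + (b-a)/i := by
          have := node_step a b i j; linarith
        have hnode_close : ∀ p : ℕ, p < i →
            |w (Set.projIcc a b hab.le (node a b i (p+1))) -
              w (Set.projIcc a b hab.le (node a b i p))| < ε/3 := by
          intro p hp
          apply hδ0 w hwV
          rw [coe_proj hab.le hi (Nat.succ_le_of_lt hp), coe_proj hab.le hi hp.le]
          rw [node_step, abs_of_nonneg hh.le]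
          linarith
        have hb1 : |L i w x - w (Set.projIcc a b hab.le (node a b i j))| < ε/3 :=
          lt_of_le_of_lt (interp_bound hab hi (hL i hi) w hj x hj1 hj2 _)
            (max_lt (by rw [sub_self, abs_zero]; linarith) (hnode_close j hj))
        have hb2 : |L i w y - w (Set.projIcc a b hab.le (node a b i k))| < ε/3 :=
          lt_of_le_of_lt (interp_bound hab hi (hL i hi) w hk y hk1 hk2 _)
            (max_lt (by rw [sub_self, abs_zero]; linarith) (hnode_close k hk))
        have hb3 : |w (Set.projIcc a b hab.le (node a b i j)) -
            w (Set.projIcc a b hab.le (node a b i k))| < ε/3 := by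
          apply hδ0 w hwV
          rw [coe_proj hab.le hi hj.le, coe_proj hab.le hi hk.le, abs_lt]
          constructor <;> linarith
        have t1 := abs_sub_le (L i w x) (w (Set.projIcc a b hab.le (node a b i j))) (L i w y)
        have t2 := abs_sub_le (w (Set.projIcc a b hab.le (node a b i j)))
          (w (Set.projIcc a b hab.le (node a b i k))) (L i w y)
        have t3 : |w (Set.projIcc a b hab.le (node a b i k)) - L i w y|
            = |L i w y - w (Set.projIcc a b hab.le (node a b i k))| := abs_sub_comm _ _
        linarith
      · -- coarse mesh
        push_neg at hcase
        have h2M : ∀ p q : Set.Icc a b, |w p - w q| ≤ 2*M := by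
          intro p q
          calc |w p - w q| = |w p + -(w q)| := by ring_nf
            _ ≤ |w p| + |-(w q)| := abs_add_le _ _
            _ ≤ M + M := by rw [abs_neg]; exact add_le_add (hMV w hwV p) (hMV w hwV q)
            _ = 2*M := by ring
        have numeric : ∀ Δ : ℝ, 0 ≤ Δ → Δ * ((b-a)/i) ≤ 2*M*((y:ℝ)-(x:ℝ)) → Δ < ε := by
          intro Δ hΔ0 hkey
          have hyx0 : (0:ℝ) ≤ (y:ℝ)-(x:ℝ) := by linarith
          have h1 : Δ * (δ0/3) ≤ Δ * ((b-a)/i) := mul_le_mul_of_nonneg_left hcase hΔ0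
          have h2 : 2*M*((y:ℝ)-(x:ℝ)) ≤ 2*M*δ := mul_le_mul_of_nonneg_left (le_of_lt hd) (by linarith)
          have h3 : Δ * δ0 ≤ 6*M*δ := by linarith
          have h4 := mul_le_mul_of_nonneg_right h3 (show (0:ℝ) ≤ 24*M+24 by linarith)
          have h5 := mul_le_mul_of_nonneg_left hδ2 (show (0:ℝ) ≤ 6*M by linarith)
          have h6 := mul_pos hε hδ0pos
          have h7 : 0 ≤ M*(ε*δ0) := mul_nonneg hM0 h6.le
          have hc : 0 < δ0*(24*M+24) := mul_pos hδ0pos (by linarith)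
          have h8 : Δ * (δ0*(24*M+24)) < ε * (δ0*(24*M+24)) := by nlinarith [h4, h5, h6, h7]
          exact lt_of_mul_lt_mul_right h8 hc.le
        by_cases hxk : node a b i k ≤ (x:ℝ)
        · have key := interp_lip hab hi (hL i hi) w hk x y hxy hxk hk2
          exact numeric _ (abs_nonneg _)
            (le_trans key (mul_le_mul_of_nonneg_right (h2M _ _) (by linarith)))
        · push_neg at hxk
          have hk1' : 1 ≤ k := by
            by_contra hc
            push_neg at hc
            have hk0 : k = 0 := Nat.lt_one_iff.mp hc
            have hna : node a b i 0 = a := by simp [node]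
            have := x.2.1
            rw [hk0, hna] at hxk
            exact absurd this (not_le.mpr hxk)
          have hkk : k - 1 + 1 = k := Nat.succ_pred_eq_of_pos hk1'
          have hjk : k - 1 < i := lt_of_le_of_lt (Nat.sub_le _ _) hk
          have hnj : node a b i (k-1) = node a b i k - (b-a)/i := by
            have h := node_step a b i (k-1)
            rw [hkk] at h
            linarith
          have hzc : ((Set.projIcc a b hab.le (node a b i k) : Set.Icc a b) : ℝ)
              = node a b i k := coe_proj hab.le hi hk.le
          have hxz : (x:ℝ) ≤ ((Set.projIcc a b hab.le (node a b i k) : Set.Icc a b) : ℝ) := by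
            rw [hzc]; linarith
          have hzy : ((Set.projIcc a b hab.le (node a b i k) : Set.Icc a b) : ℝ) ≤ (y:ℝ) := by
            rw [hzc]; exact hk1
          have hjx : node a b i (k-1) ≤ (x:ℝ) := by
            rw [hnj]; linarith
          have key1 := interp_lip hab hi (hL i hi) w hjk x
            (Set.projIcc a b hab.le (node a b i k)) hxz hjx (by rw [hkk, hzc])
          have key2 := interp_lip hab hi (hL i hi) w hk
            (Set.projIcc a b hab.le (node a b i k)) y hzy (by rw [hzc]) hk2
          have tri := abs_sub_le (L i w x) (L i w (Set.projIcc a b hab.le (node a b i k)))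
            (L i w y)
          have trih := mul_le_mul_of_nonneg_right tri hh.le
          have e1 : |L i w x - L i w (Set.projIcc a b hab.le (node a b i k))| * ((b-a)/i)
              ≤ 2*M*(((Set.projIcc a b hab.le (node a b i k) : Set.Icc a b) : ℝ)-(x:ℝ)) :=
            le_trans key1 (mul_le_mul_of_nonneg_right (h2M _ _) (by linarith))
          have e2 : |L i w (Set.projIcc a b hab.le (node a b i k)) - L i w y| * ((b-a)/i)
              ≤ 2*M*((y:ℝ)-((Set.projIcc a b hab.le (node a b i k) : Set.Icc a b) : ℝ)) :=
            le_trans key2 (mul_le_mul_of_nonneg_right (h2M _ _) (by linarith))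
          exact numeric _ (abs_nonneg _) (by rw [add_mul] at trih; linarith)
  refine ⟨⟨M, hMW⟩, hEC, ?_⟩
  -- pre-compactness via Arzelà–Ascoli
  set e := ContinuousMap.isometryEquivBoundedOfCompact (Set.Icc a b) ℝ with hedef
  have key : IsCompact (closure (e '' W)) := by
    apply BoundedContinuousFunction.arzela_ascoli (Metric.closedBall (0:ℝ) M)
      (isCompact_closedBall 0 M)
    · rintro f x ⟨u, huW, rfl⟩
      rw [Metric.mem_closedBall, dist_zero_right, Real.norm_eq_abs]
      exact hMW u huW x
    · apply UniformEquicontinuous.equicontinuous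
      rw [Metric.uniformEquicontinuous_iff]
      intro ε hε
      obtain ⟨δ, hδpos, hδ⟩ := hEC ε hε
      refine ⟨δ, hδpos, fun x y hdist f => ?_⟩
      obtain ⟨u, huW, hfu⟩ := f.2
      have hfx : ∀ z : Set.Icc a b, (f : Set.Icc a b → ℝ) z = u z := by
        intro z
        rw [← hfu]
        rfl
      show dist ((f : Set.Icc a b → ℝ) x) ((f : Set.Icc a b → ℝ) y) < ε
      rw [hfx, hfx, Real.dist_eq]
      apply hδ u huW
      rwa [Subtype.dist_eq, Real.dist_eq] at hdist
  have himg : e '' closure W = closure (e '' W) := e.toHomeomorph.image_closure W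
  have : IsCompact (e '' closure W) := by rw [himg]; exact key
  exact (e.toHomeomorph.isCompact_image).mp this
end

section
/- Let a < b be reals, let V be a compact subset of C([a,b]) with the sup-norm, and for each positive integer m let L_m be the piecewise linear interpolation operator at the uniform nodes x_j = a + j(b−a)/m. Set U_m = L_m(V), W_m = V ∪ U_m, and W = ⋃_{i=1}^∞ W_i. Then W is a closed subset of C([a,b]): if a sequence {w_i} ⊆ W converges in sup-norm to some w₀ ∈ C([a,b]), then w₀ ∈ W. -/
lemma node_succ_sub (a b : ℝ) {m : ℕ} (hm : 0 < m) (j : ℕ) :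
    node a b m (j + 1) - node a b m j = (b - a) / m := by
  have hm' : (m : ℝ) ≠ 0 := Nat.cast_ne_zero.2 hm.ne'
  simp only [node]
  push_cast
  field_simp
  ring

lemma node_mem {a b : ℝ} (hab : a ≤ b) {m j : ℕ} (hm : 0 < m) (hj : j ≤ m) :
    node a b m j ∈ Set.Icc a b := by
  have hm' : (0 : ℝ) < m := Nat.cast_pos.2 hm
  have hj' : (j : ℝ) ≤ m := Nat.cast_le.2 hj
  constructor
  · have : 0 ≤ (j : ℝ) * (b - a) / m :=
      div_nonneg (mul_nonneg (Nat.cast_nonneg j) (by linarith)) hm'.le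
    simp only [node]; linarith
  · simp only [node]
    have h1 : (j : ℝ) * (b - a) / m ≤ b - a := by
      rw [div_le_iff₀ hm']
      nlinarith [mul_le_mul_of_nonneg_right hj' (sub_nonneg.2 hab)]
    linarith

lemma convex_abs_le {p q D t : ℝ} (hp : |p| ≤ D) (hq : |q| ≤ D) (ht0 : 0 ≤ t) (ht1 : t ≤ 1) :
    |(1 - t) * p + t * q| ≤ D := by
  rcases abs_le.1 hp with ⟨hp1, hp2⟩
  rcases abs_le.1 hq with ⟨hq1, hq2⟩
  rw [abs_le]
  constructor <;> nlinarith

lemma exists_node_mem {a b : ℝ} (hab : a < b) {m : ℕ} (hm : 0 < m) {x : ℝ}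
    (hx : x ∈ Set.Icc a b) :
    ∃ j : ℕ, j < m ∧ node a b m j ≤ x ∧ x ≤ node a b m (j + 1) := by
  have hba : (0 : ℝ) < b - a := by linarith [hab]
  have hm' : (0 : ℝ) < m := Nat.cast_pos.2 hm
  set t : ℝ := (x - a) * m / (b - a) with ht
  have ht0 : 0 ≤ t := by
    apply div_nonneg _ hba.le
    exact mul_nonneg (by linarith [hx.1]) hm'.le
  refine ⟨min (⌊t⌋.toNat) (m - 1), ?_, ?_, ?_⟩
  · exact lt_of_le_of_lt (min_le_right _ _) (Nat.pred_lt hm.ne')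
  · -- node j ≤ x
    have h1 : ((min (⌊t⌋.toNat) (m - 1) : ℕ) : ℝ) ≤ t := by
      have : ((min (⌊t⌋.toNat) (m - 1) : ℕ) : ℝ) ≤ (⌊t⌋.toNat : ℝ) :=
        Nat.cast_le.2 (min_le_left _ _)
      have h2 : ((⌊t⌋.toNat : ℕ) : ℝ) ≤ t := by
        calc ((⌊t⌋.toNat : ℕ) : ℝ) = ((⌊t⌋.toNat : ℤ) : ℝ) := by push_cast; ring
          _ = (⌊t⌋ : ℝ) := by rw [Int.toNat_of_nonneg (Int.floor_nonneg.2 ht0)]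
          _ ≤ t := Int.floor_le t
      linarith
    rw [ht, le_div_iff₀ hba] at h1
    simp only [node]
    rw [← sub_nonneg]
    have : x - (a + (min (⌊t⌋.toNat) (m-1) : ℕ) * (b - a) / m)
        = ((x - a) * m - (min (⌊t⌋.toNat) (m-1) : ℕ) * (b - a)) / m := by
      field_simp
      ring
    rw [this]
    apply div_nonneg _ hm'.le
    linarith
  · -- x ≤ node (j+1)
    have h1 : t ≤ ((min (⌊t⌋.toNat) (m - 1) : ℕ) : ℝ) + 1 := by
      rcases le_or_gt (⌊t⌋.toNat) (m - 1) with h | h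
      · rw [min_eq_left h]
        have h2 : t < ((⌊t⌋.toNat : ℕ) : ℝ) + 1 := by
          have he : ((⌊t⌋.toNat : ℕ) : ℝ) = (⌊t⌋ : ℝ) := by
            calc ((⌊t⌋.toNat : ℕ) : ℝ) = ((⌊t⌋.toNat : ℤ) : ℝ) := by push_cast; ring
              _ = (⌊t⌋ : ℝ) := by rw [Int.toNat_of_nonneg (Int.floor_nonneg.2 ht0)]
          rw [he]
          exact Int.lt_floor_add_one t
        linarith
      · rw [min_eq_right h.le]
        have h2 : t ≤ m := by
          rw [ht, div_le_iff₀ hba]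
          have := hx.2
          nlinarith
        have h3 : ((m - 1 : ℕ) : ℝ) + 1 = m := by
          have : (1 : ℕ) ≤ m := hm
          push_cast [Nat.cast_sub this]
          ring
        rw [h3]; exact h2
    rw [ht, div_le_iff₀ hba] at h1
    simp only [node]
    rw [← sub_nonneg]
    have : (a + ((min (⌊t⌋.toNat) (m-1) : ℕ) + 1 : ℕ) * (b - a) / m) - x
        = (((min (⌊t⌋.toNat) (m-1) : ℕ) : ℝ) + 1) * (b - a) / m - (x - a) := by
      push_cast; ring
    rw [this, sub_nonneg, le_div_iff₀ hm']
    nlinarith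

lemma interp_decomp {Au Bu Av Bv xr nj h : ℝ} (hh : h ≠ 0) :
    (Au + (Bu - Au) / h * (xr - nj)) - (Av + (Bv - Av) / h * (xr - nj))
      = (1 - (xr - nj) / h) * (Au - Av) + ((xr - nj) / h) * (Bu - Bv) := by
  field_simp
  ring

lemma interp_decomp2 {Au Bu ux xr nj h : ℝ} (hh : h ≠ 0) :
    (Au + (Bu - Au) / h * (xr - nj)) - ux
      = (1 - (xr - nj) / h) * (Au - ux) + ((xr - nj) / h) * (Bu - ux) := by
  field_simp
  ring

lemma L_lip {a b : ℝ} (hab : a < b) {m : ℕ} (hm : 0 < m)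
    {L : C(Set.Icc a b, ℝ) → C(Set.Icc a b, ℝ)} (hL : IsLinInterp a b hab.le m L)
    (u v : C(Set.Icc a b, ℝ)) : dist (L u) (L v) ≤ dist u v := by
  rw [ContinuousMap.dist_le dist_nonneg]
  intro x
  obtain ⟨j, hj, hx1, hx2⟩ := exists_node_mem hab hm x.2
  have hu := hL u j hj x hx1 hx2
  have hv := hL v j hj x hx1 hx2
  have hstep := node_succ_sub a b hm j
  have hba : (0 : ℝ) < b - a := by linarith
  have hm' : (0 : ℝ) < m := Nat.cast_pos.2 hm
  have hh : (0 : ℝ) < (b - a) / m := by positivity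
  have ht0 : 0 ≤ ((x : ℝ) - node a b m j) / ((b - a) / m) := div_nonneg (by linarith) hh.le
  have ht1 : ((x : ℝ) - node a b m j) / ((b - a) / m) ≤ 1 := by
    rw [div_le_one hh]
    linarith [hstep]
  rw [hu, hv, hstep, Real.dist_eq, interp_decomp hh.ne']
  apply convex_abs_le _ _ ht0 ht1
  · rw [← Real.dist_eq]
    exact ContinuousMap.dist_apply_le_dist _
  · rw [← Real.dist_eq]
    exact ContinuousMap.dist_apply_le_dist _

lemma L_err {a b : ℝ} (hab : a < b) {m : ℕ} (hm : 0 < m)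
    {L : C(Set.Icc a b, ℝ) → C(Set.Icc a b, ℝ)} (hL : IsLinInterp a b hab.le m L)
    (u : C(Set.Icc a b, ℝ)) {ε : ℝ} (hε : 0 ≤ ε)
    (hmod : ∀ x y : Set.Icc a b, |(x : ℝ) - (y : ℝ)| ≤ (b - a) / m → dist (u x) (u y) ≤ ε) :
    dist (L u) u ≤ ε := by
  rw [ContinuousMap.dist_le hε]
  intro x
  obtain ⟨j, hj, hx1, hx2⟩ := exists_node_mem hab hm x.2
  have hu := hL u j hj x hx1 hx2
  have hstep := node_succ_sub a b hm j
  have hba : (0 : ℝ) < b - a := by linarith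
  have hm' : (0 : ℝ) < m := Nat.cast_pos.2 hm
  have hh : (0 : ℝ) < (b - a) / m := by positivity
  have ht0 : 0 ≤ ((x : ℝ) - node a b m j) / ((b - a) / m) := div_nonneg (by linarith) hh.le
  have ht1 : ((x : ℝ) - node a b m j) / ((b - a) / m) ≤ 1 := by
    rw [div_le_one hh]
    linarith [hstep]
  have hpj : ((Set.projIcc a b hab.le (node a b m j)) : ℝ) = node a b m j := by
    rw [Set.projIcc_of_mem hab.le (node_mem hab.le hm hj.le)]
  have hpj1 : ((Set.projIcc a b hab.le (node a b m (j + 1))) : ℝ) = node a b m (j + 1) := by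
    rw [Set.projIcc_of_mem hab.le (node_mem hab.le hm hj)]
  rw [hu, hstep, Real.dist_eq, interp_decomp2 hh.ne']
  apply convex_abs_le _ _ ht0 ht1
  · rw [← Real.dist_eq]
    apply hmod
    rw [hpj, abs_le]
    constructor <;> linarith [hstep]
  · rw [← Real.dist_eq]
    apply hmod
    rw [hpj1, abs_le]
    constructor <;> linarith [hstep]

lemma compact_unif_equi {α : Type*} [MetricSpace α] [CompactSpace α]
    {V : Set C(α, ℝ)} (hV : IsCompact V) {ε : ℝ} (hε : 0 < ε) :
    ∃ δ > 0, ∀ v ∈ V, ∀ x y : α, dist x y ≤ δ → dist (v x) (v y) ≤ ε := by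
  classical
  obtain ⟨T, hTfin, hTsub⟩ := (Metric.totallyBounded_iff.1 hV.totallyBounded) (ε / 3)
    (by positivity)
  have huc : ∀ f : C(α, ℝ), ∃ δ > 0, ∀ x y : α, dist x y ≤ δ → dist (f x) (f y) ≤ ε / 3 := by
    intro f
    have huf := CompactSpace.uniformContinuous_of_continuous f.continuous
    rw [Metric.uniformContinuous_iff] at huf
    obtain ⟨δ, hδ, hδ'⟩ := huf (ε / 3) (by positivity)
    exact ⟨δ / 2, by positivity, fun x y hxy => (hδ' (lt_of_le_of_lt hxy (by linarith))).le⟩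
  choose d hd hd' using huc
  set s : Finset C(α, ℝ) := insert 0 hTfin.toFinset with hs
  have hne : s.Nonempty := ⟨0, Finset.mem_insert_self _ _⟩
  refine ⟨s.inf' hne d, ?_, ?_⟩
  · rw [gt_iff_lt, Finset.lt_inf'_iff]
    intro f _
    exact hd f
  · intro v hv x y hxy
    obtain ⟨g, hgT, hvg⟩ := Set.mem_iUnion₂.1 (hTsub hv)
    have hgs : g ∈ s := Finset.mem_insert_of_mem (hTfin.mem_toFinset.2 hgT)
    have hxy' : dist x y ≤ d g := le_trans hxy (Finset.inf'_le d hgs)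
    have h1 : dist (v x) (g x) ≤ dist v g := ContinuousMap.dist_apply_le_dist x
    have h2 : dist (g y) (v y) ≤ dist v g := by
      rw [dist_comm]
      exact ContinuousMap.dist_apply_le_dist y
    have h3 : dist v g < ε / 3 := Metric.mem_ball.1 hvg
    have h4 := hd' g x y hxy'
    calc dist (v x) (v y) ≤ dist (v x) (g x) + dist (g x) (g y) + dist (g y) (v y) :=
          dist_triangle4 _ _ _ _
      _ ≤ ε := by linarith


/-- With `U_m = L_m(V)`, `W_m = V ∪ U_m` and `W = ⋃_{i=1}^∞ W_i`, the set `W` is a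
closed subset of `C([a,b])`: every sup-norm limit of a sequence in `W` belongs
to `W`. -/
theorem W_isClosed (a b : ℝ) (hab : a < b)
    (V : Set C(Set.Icc a b, ℝ)) (hV : IsCompact V)
    (L : ℕ → C(Set.Icc a b, ℝ) → C(Set.Icc a b, ℝ))
    (hL : ∀ i : ℕ, 0 < i → IsLinInterp a b hab.le i (L i))
    (W : Set C(Set.Icc a b, ℝ))
    (hW : W = ⋃ i ∈ {i : ℕ | 1 ≤ i}, (V ∪ (L i) '' V)) :
    IsClosed W := by
  classical
  rcases V.eq_empty_or_nonempty with hVe | hVne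
  · have hWe : W = ∅ := by
      rw [hW, hVe]
      simp
    rw [hWe]
    exact isClosed_empty
  have hba : (0 : ℝ) < b - a := by linarith
  have hLc : ∀ i : ℕ, 0 < i → Continuous (L i) := by
    intro i hi
    apply LipschitzWith.continuous (K := 1)
    apply LipschitzWith.of_dist_le_mul
    intro u v
    rw [NNReal.coe_one, one_mul]
    exact L_lip hab hi (hL i hi) u v
  have hVW : V ⊆ W := by
    rw [hW]
    intro v hv
    exact Set.mem_biUnion (show (1 : ℕ) ∈ {i : ℕ | 1 ≤ i} by simp) (Or.inl hv)
  have hLiW : ∀ i : ℕ, 1 ≤ i → L i '' V ⊆ W := by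
    intro i hi
    rw [hW]
    intro x hx
    exact Set.mem_biUnion (show i ∈ {i : ℕ | 1 ≤ i} by simpa using hi) (Or.inr hx)
  apply isClosed_of_closure_subset
  intro w hw
  by_cases hwW : w ∈ W
  · exact hwW
  exfalso
  have key : ∀ ε : ℝ, 0 < ε → Metric.infDist w V ≤ ε := by
    intro ε hε
    obtain ⟨δ, hδ, hδ'⟩ := compact_unif_equi hV hε
    obtain ⟨N, hN⟩ := exists_nat_gt ((b - a) / δ)
    set M : ℕ := max N 1 with hM
    have hsmall : ∀ i : ℕ, M < i → (b - a) / i ≤ δ := by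
      intro i hi
      have hi0 : (0 : ℝ) < i := by
        have : 0 < i := lt_of_le_of_lt (Nat.zero_le M) hi
        exact_mod_cast this
      rw [div_le_iff₀ hi0]
      have hNi : (N : ℝ) ≤ i := by
        exact_mod_cast le_trans (le_max_left N 1) hi.le
      rw [div_lt_iff₀ hδ] at hN
      nlinarith
    set Cset : Set C(Set.Icc a b, ℝ) :=
      V ∪ (⋃ i ∈ (Finset.Icc 1 M : Finset ℕ), L i '' V) ∪ {f | Metric.infDist f V ≤ ε}
      with hC
    have hCclosed : IsClosed Cset := by
      apply IsClosed.union
      apply IsClosed.union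
      · exact hV.isClosed
      · apply isClosed_biUnion_finset
        intro i hi
        have hi1 : 0 < i := (Finset.mem_Icc.1 hi).1
        exact (hV.image (hLc i hi1)).isClosed
      · exact isClosed_le (Metric.continuous_infDist_pt V) continuous_const
    have hWC : W ⊆ Cset := by
      rw [hW]
      intro x hx
      simp only [Set.mem_iUnion] at hx
      obtain ⟨i, hi, hx⟩ := hx
      rcases hx with hxV | ⟨v, hvV, rfl⟩
      · exact Or.inl (Or.inl hxV)
      rcases le_or_gt i M with hiM | hiM
      · refine Or.inl (Or.inr ?_)
        exact Set.mem_biUnion (Finset.mem_Icc.2 ⟨hi, hiM⟩) ⟨v, hvV, rfl⟩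
      · refine Or.inr ?_
        have hi0 : 0 < i := by exact hi
        have herr : dist (L i v) v ≤ ε := by
          apply L_err hab hi0 (hL i hi0) v hε.le
          intro p q hpq
          apply hδ' v hvV
          rw [Subtype.dist_eq, Real.dist_eq]
          exact le_trans hpq (hsmall i hiM)
        calc Metric.infDist (L i v) V ≤ dist (L i v) v := Metric.infDist_le_dist_of_mem hvV
          _ ≤ ε := herr
    have hwC : w ∈ Cset := closure_minimal hWC hCclosed hw
    rcases hwC with (hwV | hwB) | hwI
    · exact absurd (hVW hwV) hwW
    · obtain ⟨i, hi, hx⟩ := Set.mem_iUnion₂.1 hwB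
      exact absurd (hLiW i (Finset.mem_Icc.1 hi).1 hx) hwW
    · exact hwI
  have h0 : Metric.infDist w V ≤ 0 := by
    by_contra h
    push_neg at h
    have := key (Metric.infDist w V / 2) (by linarith)
    linarith
  have hz : Metric.infDist w V = 0 := le_antisymm h0 Metric.infDist_nonneg
  have hwV : w ∈ V := by
    have := (Metric.mem_closure_iff_infDist_zero hVne).2 hz
    rwa [hV.isClosed.closure_eq] at this
  exact absurd (hVW hwV) hwW
end

section
/- Let t_i < t_{i+1} be reals with h = t_{i+1} − t_i, let l > 0, and let Π₁ denote the linear interpolation operator on [t_i, t_{i+1}]. Then for every t ∈ [t_i, t_{i+1}], 2√π ∫_0^∞ (cos(λt/l) − (Π₁ cos(λ·/l))(t))² e^{−λ²/4} dλ + 2√π ∫_0^∞ (sin(λt/l) − (Π₁ sin(λ·/l))(t))² e^{−λ²/4} dλ ≤ 24π · h⁴/l⁴. -/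
open MeasureTheory

open MeasureTheory

/-- Lipschitz bound for sin. -/
lemma my_sin_lip (x y : ℝ) : |Real.sin x - Real.sin y| ≤ |x - y| := by
  rw [Real.sin_sub_sin]
  have h1 : |Real.sin ((x - y) / 2)| ≤ |(x - y) / 2| := Real.abs_sin_le_abs
  have h2 : |Real.cos ((x + y) / 2)| ≤ 1 := Real.abs_cos_le_one _
  calc |2 * Real.sin ((x - y) / 2) * Real.cos ((x + y) / 2)|
      = 2 * |Real.sin ((x - y) / 2)| * |Real.cos ((x + y) / 2)| := by
        rw [abs_mul, abs_mul]; norm_num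
    _ ≤ 2 * |(x - y) / 2| * 1 := by
        apply mul_le_mul (by nlinarith [abs_nonneg (Real.sin ((x-y)/2))]) h2
          (abs_nonneg _) (by positivity)
    _ = |x - y| := by rw [abs_div]; simp; ring

lemma my_cos_lip (x y : ℝ) : |Real.cos x - Real.cos y| ≤ |x - y| := by
  rw [Real.cos_sub_cos]
  have h1 : |Real.sin ((x - y) / 2)| ≤ |(x - y) / 2| := Real.abs_sin_le_abs
  have h2 : |Real.sin ((x + y) / 2)| ≤ 1 := Real.abs_sin_le_one _
  calc |-2 * Real.sin ((x + y) / 2) * Real.sin ((x - y) / 2)|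
      = 2 * |Real.sin ((x + y) / 2)| * |Real.sin ((x - y) / 2)| := by
        rw [abs_mul, abs_mul]; norm_num
    _ ≤ 2 * 1 * |(x - y) / 2| := by
        apply mul_le_mul (by nlinarith [abs_nonneg (Real.sin ((x+y)/2))]) h1
          (abs_nonneg _) (by positivity)
    _ = |x - y| := by rw [abs_div]; simp; ring

/-- First-order Taylor bound from Lipschitz derivative. -/
lemma my_taylor {f f' : ℝ → ℝ} {K : ℝ}
    (hd : ∀ x, HasDerivAt f (f' x) x)
    (hlip : ∀ x y, |f' x - f' y| ≤ K * |x - y|) (a b : ℝ) :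
    |f a - f b - f' b * (a - b)| ≤ K * (a - b) ^ 2 := by
  have hK : 0 ≤ K := by
    have := hlip (b + 1) b
    simp at this
    nlinarith [abs_nonneg (f' (b+1) - f' b), this]
  set g : ℝ → ℝ := fun x => f x - f' b * x with hg
  have hgd : ∀ x ∈ Set.uIcc a b, HasDerivWithinAt g (f' x - f' b) (Set.uIcc a b) x := by
    intro x _
    have : HasDerivAt g (f' x - f' b) x := by
      have h2 : HasDerivAt (fun y => f' b * y) (f' b) x := by
        simpa using (hasDerivAt_id x).const_mul (f' b)
      exact (hd x).sub h2
    exact this.hasDerivWithinAt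
  have hbound : ∀ x ∈ Set.uIcc a b, ‖f' x - f' b‖ ≤ K * |a - b| := by
    intro x hx
    have hxb : |x - b| ≤ |a - b| := by
      rcases le_total a b with h | h
      · rw [Set.uIcc_of_le h] at hx
        rw [abs_of_nonpos (by linarith [hx.2]), abs_of_nonpos (by linarith)]
        linarith [hx.1]
      · rw [Set.uIcc_of_ge h] at hx
        rw [abs_of_nonneg (by linarith [hx.1]), abs_of_nonneg (by linarith)]
        linarith [hx.2]
    calc ‖f' x - f' b‖ = |f' x - f' b| := rfl
      _ ≤ K * |x - b| := hlip x b
      _ ≤ K * |a - b| := by nlinarith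
  have key := Convex.norm_image_sub_le_of_norm_hasDerivWithin_le hgd hbound
    (convex_uIcc a b) (Set.right_mem_uIcc) (Set.left_mem_uIcc)
  have : g a - g b = f a - f b - f' b * (a - b) := by simp [hg]; ring
  rw [this] at key
  calc |f a - f b - f' b * (a - b)| ≤ K * |a - b| * ‖a - b‖ := key
    _ = K * (a - b) ^ 2 := by
        rw [Real.norm_eq_abs, mul_assoc, ← abs_mul, ← sq, abs_sq]

/-- Linear interpolation error bound. -/
lemma my_interp {f f' : ℝ → ℝ} {K : ℝ}
    (hd : ∀ x, HasDerivAt f (f' x) x)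
    (hlip : ∀ x y, |f' x - f' y| ≤ K * |x - y|)
    {t₁ t₂ t : ℝ} (hlt : t₁ < t₂) (ht : t ∈ Set.Icc t₁ t₂) :
    |f t - (f t₁ + (f t₂ - f t₁) / (t₂ - t₁) * (t - t₁))| ≤
      K * ((t - t₁) * (t₂ - t)) := by
  have hK : 0 ≤ K := by
    have := hlip 1 0
    simp at this
    nlinarith [abs_nonneg (f' 1 - f' 0), this]
  obtain ⟨h1, h2⟩ := ht
  have hne : t₂ - t₁ ≠ 0 := by linarith
  have hA := my_taylor hd hlip t₁ t
  have hB := my_taylor hd hlip t₂ t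
  have key : f t - (f t₁ + (f t₂ - f t₁) / (t₂ - t₁) * (t - t₁)) =
      (t₂ - t) / (t₂ - t₁) * (-(f t₁ - f t - f' t * (t₁ - t))) +
      (t - t₁) / (t₂ - t₁) * (-(f t₂ - f t - f' t * (t₂ - t))) := by
    field_simp
    ring
  rw [key]
  calc |(t₂ - t) / (t₂ - t₁) * (-(f t₁ - f t - f' t * (t₁ - t))) +
      (t - t₁) / (t₂ - t₁) * (-(f t₂ - f t - f' t * (t₂ - t)))|
      ≤ |(t₂ - t) / (t₂ - t₁) * (-(f t₁ - f t - f' t * (t₁ - t)))| +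
        |(t - t₁) / (t₂ - t₁) * (-(f t₂ - f t - f' t * (t₂ - t)))| := abs_add_le _ _
    _ = (t₂ - t) / (t₂ - t₁) * |f t₁ - f t - f' t * (t₁ - t)| +
        (t - t₁) / (t₂ - t₁) * |f t₂ - f t - f' t * (t₂ - t)| := by
        rw [abs_mul, abs_mul, abs_neg, abs_neg,
          abs_of_nonneg (div_nonneg (by linarith) (by linarith) : (0:ℝ) ≤ (t₂ - t) / (t₂ - t₁)),
          abs_of_nonneg (div_nonneg (by linarith) (by linarith) : (0:ℝ) ≤ (t - t₁) / (t₂ - t₁))]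
    _ ≤ (t₂ - t) / (t₂ - t₁) * (K * (t₁ - t) ^ 2) +
        (t - t₁) / (t₂ - t₁) * (K * (t₂ - t) ^ 2) := by
        gcongr <;> first | exact div_nonneg (by linarith) (by linarith) | positivity
    _ = K * ((t - t₁) * (t₂ - t)) := by field_simp; ring

/-- The fourth Gaussian moment. -/
lemma my_moment : ∫ x in Set.Ioi (0:ℝ), x ^ 4 * Real.exp (-x ^ 2 / 4) = 12 * Real.sqrt Real.pi := by
  have h := integral_rpow_mul_exp_neg_mul_rpow (p := 2) (q := 4) (b := 1/4)
    (by norm_num) (by norm_num) (by norm_num)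
  have heq : ∀ x ∈ Set.Ioi (0:ℝ), x ^ (4:ℝ) * Real.exp (-(1/4) * x ^ (2:ℝ)) =
      x ^ 4 * Real.exp (-x ^ 2 / 4) := by
    intro x _
    rw [show (4:ℝ) = ((4:ℕ):ℝ) by norm_num, show (2:ℝ) = ((2:ℕ):ℝ) by norm_num,
      Real.rpow_natCast, Real.rpow_natCast]
    ring_nf
  rw [setIntegral_congr_fun measurableSet_Ioi heq] at h
  rw [h]
  have hb : ((1:ℝ)/4) ^ (-((4:ℝ) + 1) / 2) = 32 := by
    rw [show ((1:ℝ)/4) = (2:ℝ) ^ (-2:ℝ) by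
      rw [Real.rpow_neg (by norm_num), show (2:ℝ) = ((2:ℕ):ℝ) by norm_num,
        Real.rpow_natCast]; norm_num]
    rw [← Real.rpow_mul (by norm_num)]
    norm_num
  have hG : Real.Gamma (((4:ℝ) + 1) / 2) = 3/4 * Real.sqrt Real.pi := by
    have h52 : ((4:ℝ) + 1) / 2 = 3/2 + 1 := by norm_num
    rw [h52, Real.Gamma_add_one (by norm_num)]
    have h32 : (3:ℝ)/2 = 1/2 + 1 := by norm_num
    rw [h32, Real.Gamma_add_one (by norm_num), Real.Gamma_one_half_eq]
    ring
  rw [hb, hG]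
  ring


/-- Integral bound for one error term. -/
lemma my_int_bound {t₁ t₂ l t : ℝ} (hlt : t₁ < t₂) (hl : 0 < l) (ht : t ∈ Set.Icc t₁ t₂)
    (F : ℝ → ℝ → ℝ)
    (hptw : ∀ lam : ℝ, |F lam t - (F lam t₁ + (F lam t₂ - F lam t₁) / (t₂ - t₁) * (t - t₁))| ≤
      lam ^ 2 / l ^ 2 * ((t - t₁) * (t₂ - t))) :
    (∫ lam in Set.Ioi (0:ℝ),
        (F lam t - (F lam t₁ + (F lam t₂ - F lam t₁) / (t₂ - t₁) * (t - t₁))) ^ 2 *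
          Real.exp (-lam ^ 2 / 4)) ≤
      (t₂ - t₁) ^ 4 / (16 * l ^ 4) * (12 * Real.sqrt Real.pi) := by
  obtain ⟨ht1, ht2⟩ := ht
  have hint : IntegrableOn (fun x : ℝ => x ^ 4 * Real.exp (-x ^ 2 / 4)) (Set.Ioi 0) := by
    have h := integrableOn_rpow_mul_exp_neg_mul_sq (by norm_num : (0:ℝ) < 1/4)
      (by norm_num : (-1:ℝ) < 4)
    refine h.congr_fun (fun x _ => ?_) measurableSet_Ioi
    beta_reduce
    rw [show (4:ℝ) = ((4:ℕ):ℝ) by norm_num, Real.rpow_natCast]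
    ring_nf
  have hgi : Integrable (fun x : ℝ => (t₂ - t₁) ^ 4 / (16 * l ^ 4) *
      (x ^ 4 * Real.exp (-x ^ 2 / 4))) (volume.restrict (Set.Ioi 0)) := hint.const_mul _
  have hle : ∀ lam : ℝ,
      (F lam t - (F lam t₁ + (F lam t₂ - F lam t₁) / (t₂ - t₁) * (t - t₁))) ^ 2 *
        Real.exp (-lam ^ 2 / 4) ≤
      (t₂ - t₁) ^ 4 / (16 * l ^ 4) * (lam ^ 4 * Real.exp (-lam ^ 2 / 4)) := by
    intro lam
    set E := F lam t - (F lam t₁ + (F lam t₂ - F lam t₁) / (t₂ - t₁) * (t - t₁)) with hE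
    have h1 := hptw lam
    have h2 : (t - t₁) * (t₂ - t) ≤ (t₂ - t₁) ^ 2 / 4 := by nlinarith [sq_nonneg (t₂ + t₁ - 2 * t)]
    have hKn : (0:ℝ) ≤ lam ^ 2 / l ^ 2 := by positivity
    have h3 : |E| ≤ lam ^ 2 / l ^ 2 * ((t₂ - t₁) ^ 2 / 4) := by
      refine h1.trans ?_
      exact mul_le_mul_of_nonneg_left h2 hKn
    have h4 : E ^ 2 ≤ (t₂ - t₁) ^ 4 / (16 * l ^ 4) * lam ^ 4 := by
      have hsq : E ^ 2 = |E| ^ 2 := (sq_abs E).symm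
      have hb : (lam ^ 2 / l ^ 2 * ((t₂ - t₁) ^ 2 / 4)) ^ 2 =
          (t₂ - t₁) ^ 4 / (16 * l ^ 4) * lam ^ 4 := by
        field_simp; ring
      rw [hsq, ← hb]
      exact pow_le_pow_left₀ (abs_nonneg _) h3 2
    calc E ^ 2 * Real.exp (-lam ^ 2 / 4)
        ≤ ((t₂ - t₁) ^ 4 / (16 * l ^ 4) * lam ^ 4) * Real.exp (-lam ^ 2 / 4) :=
          mul_le_mul_of_nonneg_right h4 (Real.exp_nonneg _)
      _ = (t₂ - t₁) ^ 4 / (16 * l ^ 4) * (lam ^ 4 * Real.exp (-lam ^ 2 / 4)) := by ring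
  calc (∫ lam in Set.Ioi (0:ℝ),
        (F lam t - (F lam t₁ + (F lam t₂ - F lam t₁) / (t₂ - t₁) * (t - t₁))) ^ 2 *
          Real.exp (-lam ^ 2 / 4))
      ≤ ∫ lam in Set.Ioi (0:ℝ), (t₂ - t₁) ^ 4 / (16 * l ^ 4) *
          (lam ^ 4 * Real.exp (-lam ^ 2 / 4)) := by
        refine integral_mono_of_nonneg (Filter.Eventually.of_forall fun lam => by positivity)
          hgi (Filter.Eventually.of_forall fun lam => hle lam)
    _ = (t₂ - t₁) ^ 4 / (16 * l ^ 4) * (12 * Real.sqrt Real.pi) := by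
        rw [integral_const_mul, my_moment]

/-- **Mean-square linear interpolation error of the GRF spectral representation.**
With `h = t₂ − t₁`, `l > 0`, and `Π₁` the linear interpolation operator on
`[t₁, t₂]`, for every `t ∈ [t₁, t₂]`,
`2√π ∫₀^∞ ((I−Π₁)cos(λ·/l))(t)² e^{−λ²/4} dλ
  + 2√π ∫₀^∞ ((I−Π₁)sin(λ·/l))(t)² e^{−λ²/4} dλ ≤ 24π h⁴ / l⁴`. -/
theorem grf_interp_mean_square_error (t₁ t₂ : ℝ) (hlt : t₁ < t₂)
    (l : ℝ) (hl : 0 < l) (t : ℝ) (ht : t ∈ Set.Icc t₁ t₂) :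
    2 * Real.sqrt Real.pi *
        (∫ lam in Set.Ioi (0 : ℝ),
          (Real.cos (lam * t / l) - (Real.cos (lam * t₁ / l) +
              (Real.cos (lam * t₂ / l) - Real.cos (lam * t₁ / l)) / (t₂ - t₁) *
                (t - t₁))) ^ 2 * Real.exp (-lam ^ 2 / 4)) +
      2 * Real.sqrt Real.pi *
        (∫ lam in Set.Ioi (0 : ℝ),
          (Real.sin (lam * t / l) - (Real.sin (lam * t₁ / l) +
              (Real.sin (lam * t₂ / l) - Real.sin (lam * t₁ / l)) / (t₂ - t₁) *
                (t - t₁))) ^ 2 * Real.exp (-lam ^ 2 / 4)) ≤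
      24 * Real.pi * (t₂ - t₁) ^ 4 / l ^ 4 := by
  have hlne : l ≠ 0 := ne_of_gt hl
  -- pointwise bounds
  have hderiv : ∀ lam x : ℝ, HasDerivAt (fun s : ℝ => lam * s / l) (lam / l) x := by
    intro lam x
    simpa using ((hasDerivAt_id x).const_mul lam).div_const l
  have habs2 : ∀ lam : ℝ, |lam / l| * |lam / l| = lam ^ 2 / l ^ 2 := by
    intro lam
    rw [← abs_mul, abs_mul_self]
    field_simp
  have hptc : ∀ lam : ℝ,
      |Real.cos (lam * t / l) - (Real.cos (lam * t₁ / l) +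
        (Real.cos (lam * t₂ / l) - Real.cos (lam * t₁ / l)) / (t₂ - t₁) * (t - t₁))| ≤
      lam ^ 2 / l ^ 2 * ((t - t₁) * (t₂ - t)) := by
    intro lam
    refine my_interp (f := fun s => Real.cos (lam * s / l))
      (f' := fun s => -Real.sin (lam * s / l) * (lam / l)) ?_ ?_ hlt ht
    · intro x
      exact (hderiv lam x).cos
    · intro x y
      have he : -Real.sin (lam * x / l) * (lam / l) - -Real.sin (lam * y / l) * (lam / l) =
          -(lam / l) * (Real.sin (lam * x / l) - Real.sin (lam * y / l)) := by ring
      rw [he, abs_mul, abs_neg]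
      calc |lam / l| * |Real.sin (lam * x / l) - Real.sin (lam * y / l)|
          ≤ |lam / l| * |lam * x / l - lam * y / l| :=
            mul_le_mul_of_nonneg_left (my_sin_lip _ _) (abs_nonneg _)
        _ = |lam / l| * (|lam / l| * |x - y|) := by
            rw [show lam * x / l - lam * y / l = (lam / l) * (x - y) by field_simp,
              abs_mul]
        _ = lam ^ 2 / l ^ 2 * |x - y| := by rw [← mul_assoc, habs2]
  have hpts : ∀ lam : ℝ,
      |Real.sin (lam * t / l) - (Real.sin (lam * t₁ / l) +
        (Real.sin (lam * t₂ / l) - Real.sin (lam * t₁ / l)) / (t₂ - t₁) * (t - t₁))| ≤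
      lam ^ 2 / l ^ 2 * ((t - t₁) * (t₂ - t)) := by
    intro lam
    refine my_interp (f := fun s => Real.sin (lam * s / l))
      (f' := fun s => Real.cos (lam * s / l) * (lam / l)) ?_ ?_ hlt ht
    · intro x
      exact (hderiv lam x).sin
    · intro x y
      have he : Real.cos (lam * x / l) * (lam / l) - Real.cos (lam * y / l) * (lam / l) =
          (lam / l) * (Real.cos (lam * x / l) - Real.cos (lam * y / l)) := by ring
      rw [he, abs_mul]
      calc |lam / l| * |Real.cos (lam * x / l) - Real.cos (lam * y / l)|
          ≤ |lam / l| * |lam * x / l - lam * y / l| :=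
            mul_le_mul_of_nonneg_left (my_cos_lip _ _) (abs_nonneg _)
        _ = |lam / l| * (|lam / l| * |x - y|) := by
            rw [show lam * x / l - lam * y / l = (lam / l) * (x - y) by field_simp,
              abs_mul]
        _ = lam ^ 2 / l ^ 2 * |x - y| := by rw [← mul_assoc, habs2]
  have hc := my_int_bound hlt hl ht (fun lam s => Real.cos (lam * s / l)) hptc
  have hs := my_int_bound hlt hl ht (fun lam s => Real.sin (lam * s / l)) hpts
  have hsq : (0:ℝ) ≤ 2 * Real.sqrt Real.pi := by positivity
  have hππ : Real.sqrt Real.pi * Real.sqrt Real.pi = Real.pi :=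
    Real.mul_self_sqrt Real.pi_nonneg
  calc 2 * Real.sqrt Real.pi * _ + 2 * Real.sqrt Real.pi * _
      ≤ 2 * Real.sqrt Real.pi * ((t₂ - t₁) ^ 4 / (16 * l ^ 4) * (12 * Real.sqrt Real.pi)) +
        2 * Real.sqrt Real.pi * ((t₂ - t₁) ^ 4 / (16 * l ^ 4) * (12 * Real.sqrt Real.pi)) :=
        add_le_add (mul_le_mul_of_nonneg_left hc hsq) (mul_le_mul_of_nonneg_left hs hsq)
    _ = 3 * Real.pi * (t₂ - t₁) ^ 4 / l ^ 4 := by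
        field_simp
        linear_combination 48 * (t₂ - t₁) ^ 4 * hππ
    _ ≤ 24 * Real.pi * (t₂ - t₁) ^ 4 / l ^ 4 := by
        apply div_le_div_of_nonneg_right ?_ (by positivity)
        nlinarith [Real.pi_nonneg, pow_nonneg (le_of_lt (sub_pos.mpr hlt)) 4]
end
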